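/- arXiv:1904.02799 — 8 statements merged into one kernel-verified Lean document; each statement's English description precedes it below -/
import Mathlib

section
/- If D is a blocking odd cycle (a digraph whose underlying graph is an odd cycle x_1 x_2 ... x_{2k+1} x_1 with k ≥ 1, in which both x_1 and x_2 are each either a source or a sink), then D does not satisfy the BE-property; that is, there exists a maximum stable set S of D for which no S_BE-path partition of D exists. -/
open Relation

variable {V : Type*}

/-- `u` and `v` are adjacent in the digraph with arc relation `A`. -/
def DAdj (A : V → V → Prop) (u v : V) : Prop := A u v ∨ A v u

/-- `v` is a source: no arc enters `v`. -/
def IsSource (A : V → V → Prop) (v : V) : Prop := ∀ u, ¬ A u v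

/-- `v` is a sink: no arc leaves `v`. -/
def IsSink (A : V → V → Prop) (v : V) : Prop := ∀ u, ¬ A v u

/-- A stable (independent) set of the digraph. -/
def IsStable (A : V → V → Prop) (S : Set V) : Prop :=
  ∀ u ∈ S, ∀ v ∈ S, u ≠ v → ¬ DAdj A u v

/-- The stability number. -/
noncomputable def alphaNum (A : V → V → Prop) : ℕ :=
  sSup {n | ∃ S : Set V, IsStable A S ∧ S.ncard = n}

/-- A maximum stable set. -/
def IsMaxStable (A : V → V → Prop) (S : Set V) : Prop :=
  IsStable A S ∧ ∀ T : Set V, IsStable A T → T.ncard ≤ S.ncard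

/-- A (nonempty) directed path, given as its list of vertices. -/
def IsDiPath (A : V → V → Prop) (l : List V) : Prop :=
  l ≠ [] ∧ l.Nodup ∧ l.Chain' A

/-- A path partition of the digraph: every vertex lies on exactly one of the paths. -/
def IsPathPartition (A : V → V → Prop) (P : Set (List V)) : Prop :=
  (∀ l ∈ P, IsDiPath A l) ∧ ∀ v : V, ∃! l, l ∈ P ∧ v ∈ l

/-- An `S`-path partition: each path contains exactly one vertex of `S`. -/
def IsSPartition (A : V → V → Prop) (S : Set V) (P : Set (List V)) : Prop :=
  IsPathPartition A P ∧ ∀ l ∈ P, ∃! s, s ∈ l ∧ s ∈ S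

/-- An `S`-BE-path partition: each path contains exactly one vertex of `S`,
which is moreover an endpoint of the path. -/
def IsBEPartition (A : V → V → Prop) (S : Set V) (P : Set (List V)) : Prop :=
  IsSPartition A S P ∧
    ∀ l ∈ P, ∀ s ∈ l, s ∈ S → l.head? = some s ∨ l.getLast? = some s

/-- The α-property: every maximum stable set admits an `S`-path partition. -/
def AlphaProperty (A : V → V → Prop) : Prop :=
  ∀ S : Set V, IsMaxStable A S → ∃ P, IsSPartition A S P

/-- The BE-property: every maximum stable set admits an `S`-BE-path partition. -/
def BEProperty (A : V → V → Prop) : Prop :=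
  ∀ S : Set V, IsMaxStable A S → ∃ P, IsBEPartition A S P

/-- α-diperfect: every induced subdigraph satisfies the α-property. -/
def AlphaDiperfect (A : V → V → Prop) : Prop :=
  ∀ W : Set V, AlphaProperty (fun a b : W => A a.1 b.1)

/-- BE-diperfect: every induced subdigraph satisfies the BE-property. -/
def BEDiperfect (A : V → V → Prop) : Prop :=
  ∀ W : Set V, BEProperty (fun a b : W => A a.1 b.1)

/-- Mutual reachability. -/
def MutReach (A : V → V → Prop) (u v : V) : Prop :=
  ReflTransGen A u v ∧ ReflTransGen A v u

/-- Semicomplete digraph: any two distinct vertices are adjacent. -/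
def Semicomplete (A : V → V → Prop) : Prop :=
  ∀ u v : V, u ≠ v → DAdj A u v

/-- Strongly connected digraph. -/
def Strong (A : V → V → Prop) : Prop :=
  ∀ u v : V, ReflTransGen A u v

/-- The digraph has an induced transitive triangle. -/
def HasInducedTransitiveTriangle (A : V → V → Prop) : Prop :=
  ∃ a b c : V, a ≠ b ∧ a ≠ c ∧ b ≠ c ∧
    A a b ∧ A a c ∧ A c b ∧ ¬ A b a ∧ ¬ A c a ∧ ¬ A b c

/-- The digraph is a blocking odd cycle: its underlying graph is an odd cycle
`x_1 x_2 ⋯ x_{2k+1} x_1` (with `k ≥ 1`; here `x i` is `x_{i+1}`), and both `x_1`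
and `x_2` are each a source or a sink. -/
def IsBlockingOddCycle (A : V → V → Prop) : Prop :=
  ∃ (k : ℕ) (x : ZMod (2 * k + 1) → V), 1 ≤ k ∧ Function.Bijective x ∧
    (∀ i j, DAdj A (x i) (x j) ↔ (j = i + 1 ∨ i = j + 1)) ∧
    (IsSource A (x 0) ∨ IsSink A (x 0)) ∧
    (IsSource A (x 1) ∨ IsSink A (x 1))

/-- The digraph is an anti-directed odd cycle: its underlying graph is an odd cycle
`x_1 ⋯ x_{2k+1} x_1` with `k ≥ 2` (here `x m` is `x_{m+1}`), and each of
`x_1, x_2, x_3, x_4, x_6, x_8, …, x_{2k}` is a source or a sink. -/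
def IsAntiDirectedOddCycle (A : V → V → Prop) : Prop :=
  ∃ (k : ℕ) (x : ZMod (2 * k + 1) → V), 2 ≤ k ∧ Function.Bijective x ∧
    (∀ i j, DAdj A (x i) (x j) ↔ (j = i + 1 ∨ i = j + 1)) ∧
    ∀ m : ℕ, m ≤ 2 * k →
      (m ≤ 3 ∨ (5 ≤ m ∧ m ≤ 2 * k - 1 ∧ Odd m)) →
      (IsSource A (x (m : ZMod (2 * k + 1))) ∨ IsSink A (x (m : ZMod (2 * k + 1))))

/-- `v` is a universal vertex. -/
def IsUniversal (A : V → V → Prop) (v : V) : Prop := ∀ u, u ≠ v → DAdj A u v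

/-- The underlying simple graph of a digraph. -/
def underlyingGraph (A : V → V → Prop) : SimpleGraph V where
  Adj u v := u ≠ v ∧ DAdj A u v
  symm := ⟨fun _ _ h => ⟨h.1.symm, h.2.symm⟩⟩
  loopless := ⟨fun _ h => h.1 rfl⟩

/-- The underlying graph of the digraph is a cycle. -/
def UnderlyingIsCycle (A : V → V → Prop) : Prop :=
  ∃ (n : ℕ) (x : ZMod n → V), 3 ≤ n ∧ Function.Bijective x ∧
    ∀ i j, DAdj A (x i) (x j) ↔ (j = i + 1 ∨ i = j + 1)

/-- A perfect graph: every induced subgraph has chromatic number equal to its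
clique number. -/
def GraphPerfect (G : SimpleGraph V) : Prop :=
  ∀ W : Set V, (G.induce W).chromaticNumber = ((G.induce W).cliqueNum : ℕ∞)

/-- A Hamilton directed path whose endpoints are `{s, t}` (in some order). -/
def HamiltonPathBetween (A : V → V → Prop) (s t : V) : Prop :=
  ∃ l : List V, IsDiPath A l ∧ (∀ v : V, v ∈ l) ∧
    ((l.head? = some s ∧ l.getLast? = some t) ∨
      (l.head? = some t ∧ l.getLast? = some s))

/-- A Hamilton directed path starting at `s` and ending at `t`. -/
def HamiltonPathFromTo (A : V → V → Prop) (s t : V) : Prop :=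
  ∃ l : List V, IsDiPath A l ∧ (∀ v : V, v ∈ l) ∧
    l.head? = some s ∧ l.getLast? = some t

/-- The exceptional strong semicomplete digraph on four vertices
(`a,b,c,d = 0,1,2,3`): the 4-cycle `a→d→c→b→a` together with digons `a↔c`, `b↔d`. -/
def BadFour : Fin 4 → Fin 4 → Prop := fun u v =>
  (u, v) ∈ ({(0,3), (3,2), (2,1), (1,0), (0,2), (2,0), (1,3), (3,1)} :
    Set (Fin 4 × Fin 4))

/-- A locally in-semicomplete digraph: any two in-neighbours of a vertex are adjacent. -/
def LocallyInSemicomplete (A : V → V → Prop) : Prop :=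
  ∀ v u w : V, A u v → A w v → u ≠ w → DAdj A u w

/-- A strong component: a maximal set of pairwise mutually reachable vertices. -/
def IsStrongComponent (A : V → V → Prop) (X : Set V) : Prop :=
  X.Nonempty ∧ (∀ u ∈ X, ∀ v ∈ X, MutReach A u v) ∧
    ∀ u v, v ∈ X → MutReach A u v → u ∈ X

/-- `C` is the vertex set of an induced cycle of `G`. -/
def InducedCycleSet (G : SimpleGraph V) (C : Set V) : Prop :=
  ∃ (n : ℕ) (x : ZMod n → V), 3 ≤ n ∧ Function.Injective x ∧ Set.range x = C ∧
    ∀ i j, G.Adj (x i) (x j) ↔ (j = i + 1 ∨ i = j + 1)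

/-- `G` contains a subdivision of `K₄`: four branch vertices joined by
pairwise internally disjoint paths. -/
def HasK4Subdivision (G : SimpleGraph V) : Prop :=
  ∃ (b : Fin 4 → V) (P : ∀ i j : Fin 4, G.Walk (b i) (b j)),
    Function.Injective b ∧
    (∀ i j, i ≠ j → (P i j).IsPath) ∧
    (∀ i j m, i ≠ j → b m ∈ (P i j).support → m = i ∨ m = j) ∧
    (∀ i j k l, i ≠ j → k ≠ l → ({i, j} : Finset (Fin 4)) ≠ {k, l} →
      ∀ v, v ∈ (P i j).support → v ∈ (P k l).support →
        (v = b i ∨ v = b j) ∧ (v = b k ∨ v = b l))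

/-- 2-connected: connected, at least 3 vertices, and no cut vertex. -/
def TwoConnected (G : SimpleGraph V) : Prop :=
  G.Connected ∧ 3 ≤ Nat.card V ∧
    ∀ v : V, (G.induce {u | u ≠ v}).Preconnected

/-- If `D` is a blocking odd cycle, then `D` does not satisfy the BE-property:
there is a maximum stable set `S` with no `S`-BE-path partition. -/
theorem blocking_odd_cycle_not_BEProperty {V : Type*} [Finite V] (A : V → V → Prop)
    (h : IsBlockingOddCycle A) :
    ∃ S : Set V, IsMaxStable A S ∧ ¬ ∃ P : Set (List V), IsBEPartition A S P := by
  classical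
  obtain ⟨k, x, hk, hbij, hadj, h0, h1⟩ := h
  haveI : NeZero (2 * k + 1) := ⟨by omega⟩
  have hxinj := hbij.injective
  have hnat : ∀ a b : ℕ, a < 2*k+1 → b < 2*k+1 →
      ((a : ZMod (2*k+1)) = (b : ZMod (2*k+1))) → a = b := by
    intro a b ha hb hab
    have := (ZMod.natCast_eq_natCast_iff a b (2*k+1)).mp hab
    rwa [Nat.ModEq, Nat.mod_eq_of_lt ha, Nat.mod_eq_of_lt hb] at this
  have hsucc : ∀ a b : ℕ, a < 2*k+1 → b ≤ 2*k →
      ((a : ZMod (2*k+1)) = (b : ZMod (2*k+1)) + 1) → a = b + 1 ∨ (a = 0 ∧ b = 2*k) := by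
    intro a b ha hb hab
    have h1' : ((a : ZMod (2*k+1)) = ((b+1 : ℕ) : ZMod (2*k+1))) := by push_cast; exact hab
    have h2 := (ZMod.natCast_eq_natCast_iff _ _ _).mp h1'
    rw [Nat.ModEq, Nat.mod_eq_of_lt ha] at h2
    rcases Nat.lt_or_ge (b+1) (2*k+1) with hlt | hge
    · rw [Nat.mod_eq_of_lt hlt] at h2; exact Or.inl h2
    · have hbe : b + 1 = 2*k+1 := by omega
      rw [hbe, Nat.mod_self] at h2
      right; omega
  set F : Finset V := (Finset.Icc 1 k).image (fun i => x ((2*i : ℕ) : ZMod (2*k+1))) with hF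
  have hmemF : ∀ v, v ∈ F ↔ ∃ i, 1 ≤ i ∧ i ≤ k ∧ v = x ((2*i : ℕ) : ZMod (2*k+1)) := by
    intro v
    simp only [hF, Finset.mem_image, Finset.mem_Icc]
    constructor
    · rintro ⟨i, ⟨hi1, hi2⟩, rfl⟩; exact ⟨i, hi1, hi2, rfl⟩
    · rintro ⟨i, hi1, hi2, rfl⟩; exact ⟨i, ⟨hi1, hi2⟩, rfl⟩
  have hstable : IsStable A (↑F : Set V) := by
    intro u hu v hv hne hDadj
    rw [Finset.mem_coe, hmemF] at hu hv
    obtain ⟨i, hi1, hi2, rfl⟩ := hu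
    obtain ⟨j, hj1, hj2, rfl⟩ := hv
    rw [hadj] at hDadj
    rcases hDadj with hE | hE
    · rcases hsucc (2*j) (2*i) (by omega) (by omega) hE with h' | h' <;> omega
    · rcases hsucc (2*i) (2*j) (by omega) (by omega) hE with h' | h' <;> omega
  have hFcard : F.card = k := by
    have hc : ((Finset.Icc 1 k).image
        (fun i => x ((2*i : ℕ) : ZMod (2*k+1)))).card = (Finset.Icc 1 k).card := by
      apply Finset.card_image_of_injOn
      intro i hi j hj hij
      simp only [Finset.coe_Icc, Set.mem_Icc] at hi hj
      have := hnat (2*i) (2*j) (by omega) (by omega) (hxinj hij)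
      omega
    rw [hF, hc, Nat.card_Icc]; omega
  have hmax : IsMaxStable A (↑F : Set V) := by
    refine ⟨hstable, ?_⟩
    intro T hT
    rw [Set.ncard_coe_finset, hFcard]
    set T' : Set (ZMod (2*k+1)) := x ⁻¹' T with hT'
    have himg : x '' T' = T := Set.image_preimage_eq T hbij.surjective
    have hTn : T.ncard = T'.ncard := by
      rw [← himg, Set.ncard_image_of_injective _ hxinj]
    have hdisj : Disjoint T' ((fun i => i + 1) '' T') := by
      rw [Set.disjoint_left]
      rintro i hi ⟨j, hj, rfl⟩
      have hj1 : j ≠ j + 1 := by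
        intro hEq
        have h10 : (1 : ZMod (2*k+1)) = 0 := left_eq_add.mp hEq
        have := hnat 1 0 (by omega) (by omega) (by push_cast; exact h10)
        omega
      have hne : x j ≠ x (j+1) := fun hEq => hj1 (hxinj hEq)
      exact hT (x j) hj (x (j+1)) hi hne ((hadj j (j+1)).mpr (Or.inl rfl))
    have himgcard : ((fun i : ZMod (2*k+1) => i + 1) '' T').ncard = T'.ncard :=
      Set.ncard_image_of_injective _ (add_left_injective 1)
    have hunion : (T' ∪ (fun i => i + 1) '' T').ncard = T'.ncard + T'.ncard := by
      rw [Set.ncard_union_eq hdisj, himgcard]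
    have hle : (T' ∪ (fun i => i + 1) '' T').ncard ≤ (Set.univ : Set (ZMod (2*k+1))).ncard :=
      Set.ncard_le_ncard (Set.subset_univ _) Set.finite_univ
    rw [Set.ncard_univ, Nat.card_zmod] at hle
    omega
  refine ⟨↑F, hmax, ?_⟩
  rintro ⟨P, ⟨⟨⟨hpaths, hcover⟩, hone⟩, hBE⟩⟩
  -- Step A: every path has length ≤ 2
  have hlen : ∀ l ∈ P, l.length ≤ 2 := by
    intro l hlP
    by_contra hlong
    push_neg at hlong
    obtain ⟨a, b, c, t, rfl⟩ : ∃ a b c t, l = a :: b :: c :: t := by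
      match l, hlong with
      | a :: b :: c :: t, _ => exact ⟨a, b, c, t, rfl⟩
      | [], hx => simp at hx
      | [a], hx => simp at hx
      | [a, b], hx => simp at hx
    obtain ⟨hnil, hnd, hch⟩ := hpaths _ hlP
    rw [List.Chain', List.isChain_cons_cons] at hch
    obtain ⟨hab, hch⟩ := hch
    rw [List.isChain_cons_cons] at hch
    obtain ⟨hbc, -⟩ := hch
    simp only [List.nodup_cons, List.mem_cons] at hnd
    push_neg at hnd
    obtain ⟨⟨hab', hac', -⟩, ⟨hbc', hbt'⟩, -⟩ := hnd
    have hbF : b ∉ F := by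
      intro hbF
      rcases hBE _ hlP b (by simp) (by exact hbF) with hh | hh
      · simp only [List.head?_cons] at hh
        exact hab' (Option.some.inj hh)
      · rw [List.getLast?_cons_cons, List.getLast?_cons_cons] at hh
        obtain ⟨hcne, hbl⟩ := List.mem_getLast?_eq_getLast (l := c::t) (x := b)
          (Option.mem_def.mpr hh)
        have hbmem : b ∈ c :: t := hbl ▸ List.getLast_mem hcne
        rcases List.mem_cons.mp hbmem with h' | h'
        · exact hbc' h'
        · exact hbt' h'
    have hbns : ∀ w : V, (IsSource A w ∨ IsSink A w) → b ≠ w := by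
      rintro w (hw | hw) rfl
      · exact hw a hab
      · exact hw c hbc
    obtain ⟨ia, rfl⟩ := hbij.surjective a
    obtain ⟨j, rfl⟩ := hbij.surjective b
    obtain ⟨ic, rfl⟩ := hbij.surjective c
    have hj'lt : j.val < 2*k+1 := ZMod.val_lt j
    have hjcast : ((j.val : ℕ) : ZMod (2*k+1)) = j := ZMod.natCast_rightInverse j
    have hj0 : j.val ≠ 0 := by
      intro h0'
      refine hbns (x 0) h0 (congrArg x ?_)
      rw [← hjcast, h0']; simp
    have hj1 : j.val ≠ 1 := by
      intro h1'
      refine hbns (x 1) h1 (congrArg x ?_)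
      rw [← hjcast, h1']; simp
    have hodd : Odd j.val := by
      rcases Nat.even_or_odd j.val with he | ho
      · exfalso
        obtain ⟨r, hr⟩ := he
        apply hbF
        rw [hmemF]
        refine ⟨r, by omega, by omega, ?_⟩
        have hj2r : j.val = 2*r := by omega
        rw [← hjcast, hj2r]
      · exact ho
    obtain ⟨r, hr⟩ := hodd
    have hr1 : 1 ≤ r := by omega
    have hrk : r + 1 ≤ k := by omega
    have hcast1 : ((j.val : ℕ) : ZMod (2*k+1)) = ((2*r : ℕ) : ZMod (2*k+1)) + 1 := by
      rw [hr]; push_cast; ring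
    have hm1 : j - 1 = ((2*r : ℕ) : ZMod (2*k+1)) := by
      rw [← hjcast, hcast1]; ring
    have hm2 : j + 1 = ((2*(r+1) : ℕ) : ZMod (2*k+1)) := by
      rw [← hjcast, hcast1]; push_cast; ring
    have hA : x ia = x (j - 1) ∨ x ia = x (j + 1) := by
      rcases (hadj ia j).mp (Or.inl hab) with h' | h'
      · exact Or.inl (congrArg x (by rw [h']; ring))
      · exact Or.inr (congrArg x h')
    have hC : x ic = x (j - 1) ∨ x ic = x (j + 1) := by
      rcases (hadj j ic).mp (Or.inl hbc) with h' | h'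
      · exact Or.inr (congrArg x h')
      · exact Or.inl (congrArg x (by rw [h']; ring))
    have hmemF1 : x (j - 1) ∈ F := by
      rw [hm1, hmemF]; exact ⟨r, hr1, by omega, rfl⟩
    have hmemF2 : x (j + 1) ∈ F := by
      rw [hm2, hmemF]; exact ⟨r+1, by omega, hrk, rfl⟩
    have hne12 : x (j - 1) ≠ x (j + 1) := by
      rw [hm1, hm2]
      intro hEq
      have := hnat (2*r) (2*(r+1)) (by omega) (by omega) (hxinj hEq)
      omega
    have hpair : (x (j-1) ∈ (x ia :: x j :: x ic :: t)) ∧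
        (x (j+1) ∈ (x ia :: x j :: x ic :: t)) := by
      rcases hA with h' | h' <;> rcases hC with h'' | h''
      · exact absurd (h'.trans h''.symm) hac'
      · exact ⟨by rw [← h']; simp, by rw [← h'']; simp⟩
      · exact ⟨by rw [← h'']; simp, by rw [← h']; simp⟩
      · exact absurd (h'.trans h''.symm) hac'
    obtain ⟨s, hs, hsuniq⟩ := hone _ hlP
    have e1 := hsuniq _ ⟨hpair.1, by exact_mod_cast hmemF1⟩
    have e2 := hsuniq _ ⟨hpair.2, by exact_mod_cast hmemF2⟩
    exact hne12 (e1.trans e2.symm)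
  -- Step B: injection V → F × Bool
  choose pth hpthP hpthmem using fun v => (hcover v).exists
  choose sv hsvmem hsvF using fun v => (hone _ (hpthP v)).exists
  have hsvF' : ∀ v, sv v ∈ F := fun v => hsvF v
  have hpatheq : ∀ v w : V, sv v = sv w → pth v = pth w := by
    intro v w hEq
    obtain ⟨l, -, hluniq⟩ := hcover (sv v)
    have e1 := hluniq _ ⟨hpthP v, hsvmem v⟩
    have e2 := hluniq _ ⟨hpthP w, by rw [hEq]; exact hsvmem w⟩
    rw [e1, e2]
  have hinj : Function.Injective (fun v : V => ((⟨sv v, hsvF' v⟩ : {y // y ∈ F}),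
      decide ((pth v).head? = some v))) := by
    intro v w hvw
    simp only [Prod.mk.injEq, Subtype.mk.injEq] at hvw
    obtain ⟨hs, hflag⟩ := hvw
    have hflag' : ((pth v).head? = some v) ↔ ((pth w).head? = some w) :=
      decide_eq_decide.mp hflag
    have hpq : pth v = pth w := hpatheq v w hs
    have hlv := hlen _ (hpthP v)
    have hnev := (hpaths _ (hpthP v)).1
    have hndv := (hpaths _ (hpthP v)).2.1
    have hmv := hpthmem v
    have hmw : w ∈ pth v := by rw [hpq]; exact hpthmem w
    rw [← hpq] at hflag'
    obtain ⟨a, hLa⟩ | ⟨a, b, hLa⟩ : (∃ a, pth v = [a]) ∨ (∃ a b, pth v = [a, b]) := by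
      rcases hL : pth v with _ | ⟨a, _ | ⟨b, _ | ⟨c, t⟩⟩⟩
      · exact absurd hL hnev
      · exact Or.inl ⟨a, rfl⟩
      · exact Or.inr ⟨a, b, rfl⟩
      · rw [hL] at hlv; simp at hlv
    · rw [hLa] at hmv hmw
      simp only [List.mem_singleton] at hmv hmw
      rw [hmv, hmw]
    · rw [hLa] at hmv hmw hflag' hndv
      simp only [List.head?_cons] at hflag'
      have hab : a ≠ b := by
        simp only [List.nodup_cons, List.mem_singleton, List.mem_cons,
          List.not_mem_nil, or_false] at hndv
        exact hndv.1
      simp only [List.mem_cons, List.mem_singleton, List.not_mem_nil, or_false] at hmv hmw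
      rcases hmv with hv' | hv' <;> rcases hmw with hw' | hw'
      · rw [hv', hw']
      · exfalso
        have := hflag'.mp (by rw [hv'])
        rw [hw'] at this
        exact hab (Option.some.inj this)
      · exfalso
        have := hflag'.mpr (by rw [hw'])
        rw [hv'] at this
        exact hab (Option.some.inj this)
      · rw [hv', hw']
  have hcV : Nat.card V = 2*k+1 := by
    rw [← Nat.card_zmod (2*k+1)]
    exact (Nat.card_eq_of_bijective x hbij).symm
  have hle := Nat.card_le_card_of_injective _ hinj
  rw [Nat.card_prod] at hle
  have hc1 : Nat.card {y // y ∈ F} = k := by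
    rw [Nat.card_eq_fintype_card, Fintype.card_coe, hFcard]
  have hc2 : Nat.card Bool = 2 := by simp [Nat.card_eq_fintype_card]
  rw [hc1, hc2, hcV] at hle
  omega
end

section
/- Let D be a semicomplete digraph with no induced transitive triangle. If D is not strong, then D has exactly two strong components X1 and X2, with X1 minimal (no arcs enter X1), both X1 and X2 are complete digraphs (every pair of vertices in each is joined by arcs in both directions), every vertex of X1 dominates every vertex of X2, and for every s ∈ V(X1) and t ∈ V(X2) there exists a Hamilton directed path of D starting at s and ending at t. -/
open Relation

variable {V : Type*}

lemma ham_aux {V : Type*} [Finite V] (A : V → V → Prop) (X1 X2 : Set V)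
    (hun : X1 ∪ X2 = Set.univ)
    (harc : ∀ x y : V, x ≠ y → x ∈ X1 ∨ y ∈ X2 → A x y)
    (hdis : Disjoint X1 X2)
    {s t : V} (hs : s ∈ X1) (ht : t ∈ X2) :
    HamiltonPathFromTo A s t := by
  classical
  have hfin1 : (X1 \ {s}).Finite := Set.toFinite _
  have hfin2 : (X2 \ {t}).Finite := Set.toFinite _
  set r1 := hfin1.toFinset.toList with hr1
  set r2 := hfin2.toFinset.toList with hr2
  have hmr1 : ∀ x, x ∈ r1 ↔ x ∈ X1 \ {s} := by
    intro x; rw [hr1, Finset.mem_toList, Set.Finite.mem_toFinset]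
  have hmr2 : ∀ x, x ∈ r2 ↔ x ∈ X2 \ {t} := by
    intro x; rw [hr2, Finset.mem_toList, Set.Finite.mem_toFinset]
  set l1 : List V := s :: r1 with hl1
  set l2 : List V := r2 ++ [t] with hl2
  have hm1 : ∀ x, x ∈ l1 ↔ x ∈ X1 := by
    intro x
    simp only [hl1, List.mem_cons, hmr1, Set.mem_diff, Set.mem_singleton_iff]
    constructor
    · rintro (rfl | ⟨h, _⟩) <;> [exact hs; exact h]
    · intro h; by_cases hx : x = s
      · exact Or.inl hx
      · exact Or.inr ⟨h, hx⟩
  have hm2 : ∀ x, x ∈ l2 ↔ x ∈ X2 := by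
    intro x
    simp only [hl2, List.mem_append, List.mem_singleton, hmr2, Set.mem_diff,
      Set.mem_singleton_iff]
    constructor
    · rintro (⟨h, _⟩ | rfl) <;> [exact h; exact ht]
    · intro h; by_cases hx : x = t
      · exact Or.inr hx
      · exact Or.inl ⟨h, hx⟩
  have hnd1 : l1.Nodup := by
    rw [hl1, List.nodup_cons]
    refine ⟨fun h => ?_, Finset.nodup_toList _⟩
    exact ((hmr1 s).1 h).2 rfl
  have hnd2 : l2.Nodup := by
    rw [hl2, List.nodup_append]
    refine ⟨Finset.nodup_toList _, List.nodup_singleton _, ?_⟩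
    intro x hx y hx'
    rw [List.mem_singleton] at hx'
    subst hx'
    exact fun h => ((hmr2 x).1 hx).2 h
  have hnd : (l1 ++ l2).Nodup := by
    rw [List.nodup_append]
    refine ⟨hnd1, hnd2, fun x hx y hx' => ?_⟩
    exact hdis.ne_of_mem ((hm1 x).1 hx) ((hm2 y).1 hx')
  have hpw : (l1 ++ l2).Pairwise (fun x y => x ≠ y ∧ (x ∈ X1 ∨ y ∈ X2)) := by
    rw [List.pairwise_append]
    refine ⟨?_, ?_, ?_⟩
    · exact hnd1.imp_of_mem (fun ha hb h => ⟨h, Or.inl ((hm1 _).1 ha)⟩)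
    · exact hnd2.imp_of_mem (fun ha hb h => ⟨h, Or.inr ((hm2 _).1 hb)⟩)
    · intro x hx y hy
      exact ⟨hdis.ne_of_mem ((hm1 x).1 hx) ((hm2 y).1 hy),
        Or.inl ((hm1 x).1 hx)⟩
  refine ⟨l1 ++ l2, ⟨by simp [hl1], hnd, ?_⟩, ?_, ?_, ?_⟩
  · exact (hpw.imp fun h => harc _ _ h.1 h.2).isChain
  · intro x
    have hx : x ∈ X1 ∪ X2 := by rw [hun]; trivial
    rcases hx with hx | hx
    · exact List.mem_append.2 (Or.inl ((hm1 x).2 hx))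
    · exact List.mem_append.2 (Or.inr ((hm2 x).2 hx))
  · simp [hl1]
  · rw [hl2, ← List.append_assoc]
    simp

/-- A non-strong semicomplete digraph without induced transitive triangles has exactly
two strong components `X1, X2`, with `X1` minimal, both complete, `X1 ↦ X2`, and for all
`s ∈ X1`, `t ∈ X2` there is a Hamilton path from `s` to `t`. -/
theorem nonstrong_semicomplete_structure {V : Type*} [Finite V] (A : V → V → Prop)
    (hirr : ∀ v, ¬ A v v) (hsemi : Semicomplete A)
    (hTT : ¬ HasInducedTransitiveTriangle A) (hnstrong : ¬ Strong A) :
    ∃ X1 X2 : Set V, X1.Nonempty ∧ X2.Nonempty ∧ Disjoint X1 X2 ∧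
      X1 ∪ X2 = Set.univ ∧
      (∀ u ∈ X1, ∀ v ∈ X1, MutReach A u v) ∧
      (∀ u ∈ X2, ∀ v ∈ X2, MutReach A u v) ∧
      (∀ u ∈ X1, ∀ v ∈ X2, ¬ MutReach A u v) ∧
      (∀ u ∈ X2, ∀ v ∈ X1, ¬ A u v) ∧
      (∀ u ∈ X1, ∀ v ∈ X1, u ≠ v → A u v ∧ A v u) ∧
      (∀ u ∈ X2, ∀ v ∈ X2, u ≠ v → A u v ∧ A v u) ∧
      (∀ s ∈ X1, ∀ t ∈ X2, A s t ∧ ¬ A t s) ∧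
      (∀ s ∈ X1, ∀ t ∈ X2, HamiltonPathFromTo A s t) := by
  classical
  have hex : ∃ u v : V, ¬ ReflTransGen A u v := by
    by_contra h
    push_neg at h
    exact hnstrong fun a b => h a b
  obtain ⟨u, v, huv⟩ := hex
  set X2 : Set V := {w | ReflTransGen A u w} with hX2
  set X1 : Set V := {w | ¬ ReflTransGen A u w} with hX1
  have hvX1 : v ∈ X1 := huv
  have huX2 : u ∈ X2 := ReflTransGen.refl
  have hdis : Disjoint X1 X2 := by
    rw [Set.disjoint_left]; intro a ha ha'; exact ha ha'
  have hun : X1 ∪ X2 = Set.univ := by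
    ext a
    simp only [Set.mem_union, Set.mem_setOf_eq, Set.mem_univ, iff_true, hX1, hX2]
    exact or_comm.mp (em _)
  have hclosed : ∀ a ∈ X2, ∀ b, ReflTransGen A a b → b ∈ X2 :=
    fun a ha b hab => ha.trans hab
  have hnA : ∀ a ∈ X2, ∀ b ∈ X1, ¬ A a b := by
    intro a ha b hb hab
    exact hb (hclosed a ha b (ReflTransGen.single hab))
  have hsA : ∀ a ∈ X1, ∀ b ∈ X2, A a b := by
    intro a ha b hb
    have hne : a ≠ b := fun h => ha (by rw [h]; exact hb)
    rcases hsemi a b hne with h | h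
    · exact h
    · exact absurd h (hnA b hb a ha)
  have hC1 : ∀ a ∈ X1, ∀ b ∈ X1, a ≠ b → A a b ∧ A b a := by
    have key : ∀ a ∈ X1, ∀ b ∈ X1, a ≠ b → A a b → A b a := by
      intro a ha b hb hne hab
      by_contra hba
      have hau : a ≠ u := fun h => ha (by rw [h])
      have hbu : b ≠ u := fun h => hb (by rw [h])
      exact hTT ⟨a, u, b, hau, hne, fun h => hbu h.symm,
        hsA a ha u huX2, hab, hsA b hb u huX2,
        hnA u huX2 a ha, hba, hnA u huX2 b hb⟩
    intro a ha b hb hne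
    rcases hsemi a b hne with h | h
    · exact ⟨h, key a ha b hb hne h⟩
    · exact ⟨key b hb a ha hne.symm h, h⟩
  have hC2 : ∀ a ∈ X2, ∀ b ∈ X2, a ≠ b → A a b ∧ A b a := by
    have key : ∀ a ∈ X2, ∀ b ∈ X2, a ≠ b → A a b → A b a := by
      intro a ha b hb hne hab
      by_contra hba
      have hva : v ≠ a := fun h => hvX1 (by rw [h]; exact ha)
      have hvb : v ≠ b := fun h => hvX1 (by rw [h]; exact hb)
      exact hTT ⟨v, b, a, hvb, hva, fun h => hne h.symm,
        hsA v hvX1 b hb, hsA v hvX1 a ha, hab,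
        hnA b hb v hvX1, hnA a ha v hvX1, hba⟩
    intro a ha b hb hne
    rcases hsemi a b hne with h | h
    · exact ⟨h, key a ha b hb hne h⟩
    · exact ⟨key b hb a ha hne.symm h, h⟩
  have hmr1 : ∀ a ∈ X1, ∀ b ∈ X1, MutReach A a b := by
    intro a ha b hb
    by_cases hne : a = b
    · subst hne; exact ⟨ReflTransGen.refl, ReflTransGen.refl⟩
    · obtain ⟨h1, h2⟩ := hC1 a ha b hb hne
      exact ⟨ReflTransGen.single h1, ReflTransGen.single h2⟩
  have hmr2 : ∀ a ∈ X2, ∀ b ∈ X2, MutReach A a b := by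
    intro a ha b hb
    by_cases hne : a = b
    · subst hne; exact ⟨ReflTransGen.refl, ReflTransGen.refl⟩
    · obtain ⟨h1, h2⟩ := hC2 a ha b hb hne
      exact ⟨ReflTransGen.single h1, ReflTransGen.single h2⟩
  have harc : ∀ x y : V, x ≠ y → x ∈ X1 ∨ y ∈ X2 → A x y := by
    intro x y hne hc
    have hx : x ∈ X1 ∪ X2 := by rw [hun]; trivial
    have hy : y ∈ X1 ∪ X2 := by rw [hun]; trivial
    rcases hc with hc | hc
    · rcases hy with hy | hy
      · exact (hC1 x hc y hy hne).1
      · exact hsA x hc y hy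
    · rcases hx with hx | hx
      · exact hsA x hx y hc
      · exact (hC2 x hx y hc hne).1
  refine ⟨X1, X2, ⟨v, hvX1⟩, ⟨u, huX2⟩, hdis, hun, hmr1, hmr2, ?_, hnA, hC1, hC2,
    fun s hs t ht => ⟨hsA s hs t ht, hnA t ht s hs⟩,
    fun s hs t ht => ham_aux A X1 X2 hun harc hdis hs ht⟩
  intro a ha b hb hm
  exact ha (hclosed b hb a hm.2)
end

section
/- If D is a non-strong semicomplete digraph with no induced transitive triangle, then D has exactly two strong components. -/
open Relation

variable {V : Type*}

/-- A non-strong semicomplete digraph without induced transitive triangles has exactly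
two strong components. -/
theorem nonstrong_semicomplete_two_components {V : Type*} [Finite V] (A : V → V → Prop)
    (hirr : ∀ v, ¬ A v v) (hsemi : Semicomplete A)
    (hTT : ¬ HasInducedTransitiveTriangle A) (hnstrong : ¬ Strong A) :
    ∃ X1 X2 : Set V, X1.Nonempty ∧ X2.Nonempty ∧ Disjoint X1 X2 ∧
      X1 ∪ X2 = Set.univ ∧
      (∀ u ∈ X1, ∀ v ∈ X1, MutReach A u v) ∧
      (∀ u ∈ X2, ∀ v ∈ X2, MutReach A u v) ∧
      (∀ u ∈ X1, ∀ v ∈ X2, ¬ MutReach A u v) := by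
  classical
  -- Totality of reachability
  have total : ∀ u v : V, ReflTransGen A u v ∨ ReflTransGen A v u := by
    intro u v
    rcases eq_or_ne u v with rfl | h
    · exact Or.inl ReflTransGen.refl
    · rcases hsemi u v h with h1 | h1
      · exact Or.inl (ReflTransGen.single h1)
      · exact Or.inr (ReflTransGen.single h1)
  -- strict order
  set lt : V → V → Prop := fun u v => ReflTransGen A u v ∧ ¬ ReflTransGen A v u with hlt
  have arc : ∀ u v, lt u v → A u v := by
    intro u v ⟨h1, h2⟩
    have hne : u ≠ v := by rintro rfl; exact h2 ReflTransGen.refl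
    rcases hsemi u v hne with h | h
    · exact h
    · exact absurd (ReflTransGen.single h) h2
  have no3 : ∀ u v w, lt u v → lt v w → False := by
    intro u v w huv hvw
    have huw : lt u w := ⟨huv.1.trans hvw.1, fun h => hvw.2 (h.trans huv.1)⟩
    apply hTT
    refine ⟨u, w, v, ?_, ?_, ?_, arc _ _ huw, arc _ _ huv, arc _ _ hvw, ?_, ?_, ?_⟩
    · rintro rfl; exact huw.2 ReflTransGen.refl
    · rintro rfl; exact huv.2 ReflTransGen.refl
    · rintro rfl; exact hvw.2 ReflTransGen.refl
    · exact fun h => huw.2 (ReflTransGen.single h)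
    · exact fun h => huv.2 (ReflTransGen.single h)
    · exact fun h => hvw.2 (ReflTransGen.single h)
  -- get a, b with ¬ Reach a b
  simp only [Strong, not_forall] at hnstrong
  obtain ⟨a, b, hab⟩ := hnstrong
  have hba : lt b a := ⟨(total a b).resolve_left hab, hab⟩
  refine ⟨{v | ¬ ReflTransGen A a v}, {v | ReflTransGen A a v}, ⟨b, hab⟩,
    ⟨a, ReflTransGen.refl⟩, ?_, ?_, ?_, ?_, ?_⟩
  · rw [Set.disjoint_left]; intro x hx hx'; exact hx hx'
  · ext x; simp [em']
  · -- X1 mutual reach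
    have key : ∀ u ∈ {v | ¬ ReflTransGen A a v}, ∀ v ∈ {v | ¬ ReflTransGen A a v},
        ReflTransGen A u v := by
      intro u hu v hv
      by_contra h
      have hvu : lt v u := ⟨(total u v).resolve_left h, h⟩
      have hua : lt u a := ⟨(total a u).resolve_left hu, hu⟩
      exact no3 v u a hvu hua
    exact fun u hu v hv => ⟨key u hu v hv, key v hv u hu⟩
  · -- X2 mutual reach
    have key : ∀ u ∈ {v | ReflTransGen A a v}, ∀ v ∈ {v | ReflTransGen A a v},
        ReflTransGen A u v := by
      intro u hu v hv
      by_contra h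
      have hvu : lt v u := ⟨(total u v).resolve_left h, h⟩
      have hbv : lt b v := ⟨hba.1.trans hv, fun h' => hab (hv.trans h')⟩
      exact no3 b v u hbv hvu
    exact fun u hu v hv => ⟨key u hu v hv, key v hv u hu⟩
  · intro u hu v hv hm
    exact hu (hv.trans hm.2)
end

section
/- Every semicomplete digraph with no induced transitive triangle satisfies the BE-property: for every maximum stable set S (necessarily a single vertex), there exists an S_BE-path partition, i.e., a Hamilton directed path of D starting or ending at the vertex of S. -/
open Relation

variable {V : Type*}

section Aux

open scoped Classical in
/-- Insert a vertex into a directed path (Rédei's insertion). -/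
noncomputable def insP (A : V → V → Prop) (v : V) : List V → List V
  | [] => [v]
  | a :: t => if A v a then v :: a :: t else a :: insP A v t

lemma insP_perm (A : V → V → Prop) (v : V) :
    ∀ l : List V, (insP A v l).Perm (v :: l)
  | [] => by simp [insP]
  | a :: t => by
    classical
    by_cases h : A v a
    · simp [insP, h]
    · rw [insP.eq_def]
      simp only [h, if_false]
      exact ((insP_perm A v t).cons a).trans (List.Perm.swap v a t)

lemma insP_head (A : V → V → Prop) (v : V) :
    ∀ l : List V, (insP A v l).head? = some v ∨ (insP A v l).head? = l.head?
  | [] => by simp [insP]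
  | a :: t => by
    classical
    by_cases h : A v a <;> simp [insP, h]

lemma insP_chain {A : V → V → Prop} {v : V} :
    ∀ l : List V, l.Chain' A → (∀ a ∈ l, A v a ∨ A a v) →
      (insP A v l).Chain' A
  | [], _, _ => by simp [insP]; exact List.isChain_singleton _
  | a :: t, hc, hadj => by
    classical
    by_cases h : A v a
    · rw [insP.eq_def]
      simp only [h, if_true]
      exact List.isChain_cons_cons.mpr ⟨h, hc⟩
    · rw [insP.eq_def]
      simp only [h, if_false]
      have hav : A a v := (hadj a (by simp)).resolve_left h
      refine List.isChain_cons.mpr ⟨?_, insP_chain t hc.tail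
        (fun b hb => hadj b (by simp [hb]))⟩
      intro b hb
      rcases insP_head A v t with h1 | h1
      · rw [h1] at hb; cases hb; exact hav
      · rw [h1] at hb
        exact (List.isChain_cons.mp hc).1 b hb

lemma exists_path_perm {A : V → V → Prop} (hsemi : Semicomplete A) :
    ∀ m : List V, m.Nodup → ∃ p : List V, p.Perm m ∧ p.Chain' A
  | [], _ => ⟨[], List.Perm.refl _, List.isChain_nil⟩
  | a :: t, hnd => by
    obtain ⟨p, hperm, hchain⟩ := exists_path_perm hsemi t hnd.of_cons
    refine ⟨insP A a p, (insP_perm A a p).trans (hperm.cons a), ?_⟩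
    refine insP_chain p hchain (fun b hb => ?_)
    have hbt : b ∈ t := hperm.mem_iff.mp hb
    have hne : a ≠ b := fun h => (List.nodup_cons.mp hnd).1 (h ▸ hbt)
    exact hsemi a b hne

/-- Key structural lemma: a strict 2-path forces a closing arc. -/
lemma key_arc {A : V → V → Prop} (hirr : ∀ v, ¬ A v v)
    (hsemi : Semicomplete A) (hTT : ¬ HasInducedTransitiveTriangle A)
    {x y z : V} (h1 : A x y) (h1' : ¬ A y x) (h2 : A y z) (h2' : ¬ A z y) :
    A z x := by
  by_contra hzx
  have hxz : x ≠ z := fun h => h1' (h ▸ h2)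
  have hxy : x ≠ y := fun h => hirr y (h ▸ h1)
  have hyz : y ≠ z := fun h => hirr y (h ▸ h2)
  have hAxz : A x z := (hsemi x z hxz).resolve_right hzx
  exact hTT ⟨x, z, y, hxz, hxy, fun h => hyz h.symm, hAxz, h1, h2, hzx, h1', h2'⟩

/-- A Hamilton directed path starting or ending at `v`. -/
lemma exists_ham_endpoint {V : Type*} [Finite V] (A : V → V → Prop)
    (hirr : ∀ v, ¬ A v v) (hsemi : Semicomplete A)
    (hTT : ¬ HasInducedTransitiveTriangle A) (v : V) :
    ∃ l : List V, l.Nodup ∧ l.Chain' A ∧ (∀ u : V, u ∈ l) ∧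
      (l.head? = some v ∨ l.getLast? = some v) := by
  classical
  have := Fintype.ofFinite V
  set m : List V := (Finset.univ.toList (α := V)).erase v with hm
  have hmnd : m.Nodup := (Finset.nodup_toList _).erase v
  have hvm : v ∉ m := List.Nodup.not_mem_erase (Finset.nodup_toList _)
  have hmem : ∀ u : V, u ≠ v → u ∈ m := fun u hu => by
    rw [hm, List.mem_erase_of_ne hu]; exact Finset.mem_toList.mpr (Finset.mem_univ u)
  obtain ⟨p, hperm, hchain⟩ := exists_path_perm hsemi m hmnd
  have hpnd : p.Nodup := hperm.nodup_iff.mpr hmnd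
  have hvp : v ∉ p := fun h => hvm (hperm.mem_iff.mp h)
  have hmemp : ∀ u : V, u ≠ v → u ∈ p := fun u hu =>
    hperm.mem_iff.mpr (hmem u hu)
  rcases p with _ | ⟨a, t⟩
  · exact ⟨[v], by simp, List.isChain_singleton _, fun u => by
      by_cases hu : u = v
      · simp [hu]
      · exact absurd (hmemp u hu) (by simp), Or.inl rfl⟩
  · set p := a :: t with hp
    have hpne : p ≠ [] := by simp [hp]
    set z := p.getLast hpne with hz
    have hzlast : p.getLast? = some z := List.getLast?_eq_getLast_of_ne_nil hpne
    have hzp : z ∈ p := List.getLast_mem hpne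
    have hap : a ∈ p := by simp [hp]
    have hav_ne : a ≠ v := fun h => hvp (h ▸ hap)
    have hzv_ne : z ≠ v := fun h => hvp (h ▸ hzp)
    by_cases hzv : A z v
    · refine ⟨p ++ [v], ?_, ?_, ?_, Or.inr List.getLast?_concat⟩
      · exact List.nodup_append'.mpr ⟨hpnd, by simp, by
          simpa [List.disjoint_right] using hvp⟩
      · refine hchain.append (List.isChain_singleton _) ?_
        intro x hx y hy
        simp only [List.head?_cons, Option.mem_def, Option.some.injEq] at hy
        rw [hzlast] at hx
        cases hx; cases hy; exact hzv
      · intro u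
        by_cases hu : u = v
        · simp [hu]
        · simp [hmemp u hu]
    · by_cases hva : A v a
      · exact ⟨v :: p, List.nodup_cons.mpr ⟨hvp, hpnd⟩,
          List.isChain_cons_cons.mpr ⟨hva, hchain⟩,
          fun u => by
            by_cases hu : u = v
            · simp [hu]
            · simp [hmemp u hu], Or.inl rfl⟩
      · -- both ends fail: use the key lemma to rotate
        have hAav : A a v := (hsemi a v hav_ne).resolve_right hva
        have hAvz : A v z := (hsemi v z (Ne.symm hzv_ne)).resolve_right hzv
        have hAza : A z a := key_arc hirr hsemi hTT hAav hva hAvz hzv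
        -- t must be nonempty
        rcases t with _ | ⟨b, t'⟩
        · exfalso
          have : z = a := by simp [hz, hp]
          exact hva (this ▸ hAvz)
        · set t := b :: t' with ht
          have htne : t ≠ [] := by simp [ht]
          have hzt : t.getLast? = some z := by
            rw [hz, List.getLast_cons htne]
            exact List.getLast?_eq_getLast_of_ne_nil htne
          have hant : a ∉ t := (List.nodup_cons.mp hpnd).1
          have hvt : v ∉ t := fun h => hvp (by simp [hp, h])
          refine ⟨t ++ [a, v], ?_, ?_, ?_, Or.inr ?_⟩
          · refine List.nodup_append'.mpr ⟨(List.nodup_cons.mp hpnd).2,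
              by simp [hav_ne], ?_⟩
            intro x hx
            simp only [List.mem_cons, List.not_mem_nil, or_false]
            rintro (rfl | rfl)
            · exact hant hx
            · exact hvt hx
          · refine (List.isChain_cons_cons.mp hchain).2.append
              (List.isChain_cons_cons.mpr ⟨hAav, List.isChain_singleton _⟩) ?_
            intro x hx y hy
            rw [hzt] at hx
            simp only [List.head?_cons, Option.mem_def, Option.some.injEq] at hy
            cases hx; cases hy; exact hAza
          · intro u
            by_cases hu : u = v
            · simp [hu]
            · have := hmemp u hu
              rw [hp] at this
              rcases List.mem_cons.mp this with h | h <;> simp [h]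
          · show (t ++ [a, v]).getLast? = some v
            have : t ++ [a, v] = (t ++ [a]) ++ [v] := by simp
            rw [this]
            exact List.getLast?_concat

end Aux

/-- Every semicomplete digraph without induced transitive triangles satisfies the
BE-property. -/
theorem semicomplete_BEProperty {V : Type*} [Finite V] (A : V → V → Prop)
    (hirr : ∀ v, ¬ A v v) (hsemi : Semicomplete A)
    (hTT : ¬ HasInducedTransitiveTriangle A) :
    BEProperty A := by
  intro S hS
  rcases isEmpty_or_nonempty V with h | h
  · refine ⟨∅, ⟨⟨⟨fun l hl => absurd hl (Set.notMem_empty l),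
      fun v => isEmptyElim v⟩,
      fun l hl => absurd hl (Set.notMem_empty l)⟩,
      fun l hl => absurd hl (Set.notMem_empty l)⟩⟩
  · obtain ⟨u₀⟩ := h
    have hstab1 : IsStable A {u₀} := by
      intro a ha b hb hne _
      rw [Set.mem_singleton_iff] at ha hb
      exact hne (ha.trans hb.symm)
    have h1 : 1 ≤ S.ncard := by
      have := hS.2 {u₀} hstab1
      simpa using this
    have hsub : S.Subsingleton := by
      intro a ha b hb
      by_contra hne
      exact hS.1 a ha b hb hne (hsemi a b hne)
    obtain ⟨v, hvS⟩ := Set.nonempty_of_ncard_ne_zero (s := S) (by omega)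
    have hSv : S = {v} := hsub.eq_singleton_of_mem hvS
    obtain ⟨l, hnd, hch, hall, hend⟩ := exists_ham_endpoint A hirr hsemi hTT v
    have hlne : l ≠ [] := by
      intro hl
      have := hall v
      rw [hl] at this
      simp at this
    refine ⟨{l}, ⟨⟨⟨fun l' hl' => ?_, fun u => ?_⟩, fun l' hl' => ?_⟩,
      fun l' hl' s hs hsS => ?_⟩⟩
    · rw [Set.mem_singleton_iff] at hl'
      subst hl'
      exact ⟨hlne, hnd, hch⟩
    · exact ⟨l, ⟨rfl, hall u⟩, fun l'' h'' => h''.1⟩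
    · rw [Set.mem_singleton_iff] at hl'
      subst hl'
      refine ⟨v, ⟨hall v, hvS⟩, fun s hs => ?_⟩
      rw [hSv, Set.mem_singleton_iff] at hs
      exact hs.2
    · rw [Set.mem_singleton_iff] at hl'
      subst hl'
      rw [hSv, Set.mem_singleton_iff] at hsS
      subst hsS
      exact hend
end

section
/- If D is a digraph with no induced transitive triangle whose underlying graph is perfect, then D is BE-diperfect. -/
open Relation

variable {V : Type*}

namespace BEaux

variable {A : V → V → Prop}

lemma DAdj.symm' {u v : V} (h : DAdj A u v) : DAdj A v u := h.elim Or.inr Or.inl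

lemma chain_insert (v : V) :
    ∀ (q : List V), (∀ u ∈ q, DAdj A v u) → q.Chain' A →
    ∃ r : List V, r.Perm (v :: q) ∧ r.Chain' A ∧ (r.head? = some v ∨ r.head? = q.head?)
  | [], _, _ => ⟨[v], List.Perm.refl _, List.isChain_singleton _, Or.inl rfl⟩
  | a :: q', hadj, hch => by
    by_cases hva : A v a
    · exact ⟨v :: a :: q', List.Perm.refl _, List.isChain_cons_cons.2 ⟨hva, hch⟩, Or.inl rfl⟩
    · have hav : A a v := (hadj a (by simp)).resolve_left hva
      obtain ⟨r', hp', hc', hh'⟩ :=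
        chain_insert v q' (fun u hu => hadj u (List.mem_cons_of_mem _ hu)) hch.tail
      refine ⟨a :: r', ?_, ?_, Or.inr rfl⟩
      · exact (hp'.cons a).trans (List.Perm.swap v a q')
      · refine List.isChain_cons.2 ⟨?_, hc'⟩
        intro y hy
        rcases hh' with h | h
        · rw [h] at hy; cases hy; exact hav
        · rw [h] at hy
          cases q' with
          | nil => simp at hy
          | cons b q'' => cases hy; exact (List.isChain_cons_cons.1 hch).1

lemma redei : ∀ (l : List V), l.Nodup →
    (∀ u ∈ l, ∀ w ∈ l, u ≠ w → DAdj A u w) →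
    ∃ r : List V, r.Perm l ∧ r.Chain' A
  | [], _, _ => ⟨[], List.Perm.refl _, List.isChain_nil⟩
  | v :: l', hnd, hadj => by
    obtain ⟨r', hp', hc'⟩ := redei l' hnd.of_cons
      (fun u hu w hw huw => hadj u (List.mem_cons_of_mem _ hu) w (List.mem_cons_of_mem _ hw) huw)
    have hvl' : v ∉ l' := (List.nodup_cons.1 hnd).1
    obtain ⟨r, hp, hc, _⟩ := chain_insert v r' (fun u hu => by
      have hu' : u ∈ l' := hp'.mem_iff.1 hu
      exact hadj v (by simp) u (List.mem_cons_of_mem _ hu') (fun h => hvl' (h ▸ hu'))) hc'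
    exact ⟨r, hp.trans (hp'.cons v), hc⟩

lemma ham_endpoint [DecidableEq V] (hTT : ¬ HasInducedTransitiveTriangle A)
    (l : List V) (hnd : l.Nodup)
    (hadj : ∀ u ∈ l, ∀ w ∈ l, u ≠ w → DAdj A u w) (s : V) (hs : s ∈ l) :
    ∃ p : List V, p.Perm l ∧ p.Chain' A ∧ (p.head? = some s ∨ p.getLast? = some s) := by
  set q := l.erase s with hq
  have hpq : (s :: q).Perm l := (List.perm_cons_erase hs).symm
  have hqnd : q.Nodup := hnd.erase s
  have hsq : s ∉ q := hnd.not_mem_erase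
  have hqsub : ∀ u ∈ q, u ∈ l := fun u hu => List.erase_subset hu
  obtain ⟨r, hrq, hrc⟩ := redei q hqnd
    (fun u hu w hw huw => hadj u (hqsub u hu) w (hqsub w hw) huw)
  have hsr : s ∉ r := fun h => hsq (hrq.mem_iff.1 h)
  have hadjs : ∀ u ∈ r, DAdj A s u := fun u hu => by
    have hu' : u ∈ l := hqsub u (hrq.mem_iff.1 hu)
    exact hadj s hs u hu' (fun h => hsr (h ▸ hu))
  cases r with
  | nil =>
    have hq0 : [] = q := hrq.nil_eq
    refine ⟨[s], ?_, List.isChain_singleton _, Or.inl rfl⟩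
    have h2 : (s :: q).Perm l := hpq
    rw [← hq0] at h2; exact h2
  | cons a r' =>
    have hne : (a :: r') ≠ [] := List.cons_ne_nil a r'
    set b := (a :: r').getLast hne with hbdef
    have hb : b ∈ a :: r' := List.getLast_mem hne
    have ha : a ∈ a :: r' := by simp
    have hsa' : s ≠ a := fun h => hsr (h ▸ ha)
    have hsb' : s ≠ b := fun h => hsr (h ▸ hb)
    by_cases hsa : A s a
    · exact ⟨s :: a :: r', (hrq.cons s).trans hpq, List.isChain_cons_cons.2 ⟨hsa, hrc⟩, Or.inl rfl⟩
    · have has : A a s := (hadjs a ha).resolve_left hsa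
      by_cases hbs : A b s
      · refine ⟨(a :: r') ++ [s], ?_, ?_, Or.inr List.getLast?_concat⟩
        · exact (List.perm_append_singleton s (a :: r')).trans ((hrq.cons s).trans hpq)
        · refine List.isChain_append.2 ⟨hrc, by simp, ?_⟩
          intro x hx y hy
          simp only [List.head?_cons, Option.mem_def, Option.some.injEq] at hy
          rw [List.getLast?_eq_getLast hne] at hx
          cases hx; cases hy; exact hbs
      · have hsb : A s b := (hadjs b hb).resolve_right hbs
        have hab2 : a ≠ b := fun h => hbs (h ▸ has)
        cases r' with
        | nil => exact absurd (by simp [hbdef]) hab2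
        | cons c r'' =>
          have hbl : b ∈ l := hqsub b (hrq.mem_iff.1 hb)
          have hal : a ∈ l := hqsub a (hrq.mem_iff.1 ha)
          by_cases hba : A b a
          · refine ⟨s :: b :: (a :: c :: r'').dropLast, ?_, ?_, Or.inl rfl⟩
            · have h1 : (b :: (a :: c :: r'').dropLast).Perm (a :: c :: r'') := by
                have := List.dropLast_append_getLast (l := a :: c :: r'') (by simp)
                calc (b :: (a :: c :: r'').dropLast).Perm
                      ((a :: c :: r'').dropLast ++ [b]) := (List.perm_append_singleton _ _).symm
                  _ = a :: c :: r'' := this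
              exact ((h1.cons s).trans (hrq.cons s)).trans hpq
            · refine List.isChain_cons_cons.2 ⟨hsb, ?_⟩
              have hdl : (a :: c :: r'').dropLast.Chain' A := hrc.prefix (List.dropLast_prefix _)
              refine List.isChain_cons.2 ⟨?_, hdl⟩
              intro y hy
              rw [List.dropLast_cons₂] at hy
              cases hy; exact hba
          · exfalso
            apply hTT
            have hab : A a b := (hadj a hal b hbl hab2).resolve_right hba
            exact ⟨a, b, s, hab2, fun h => hsa' h.symm, fun h => hsb' h.symm,
              hab, has, hsb, hba, hsa, hbs⟩


set_option linter.unusedSectionVars false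
set_option linter.unusedVariables false

variable [Fintype V] (A : V → V → Prop)

def CliqF (T : Finset V) : Prop := ∀ u ∈ T, ∀ v ∈ T, u ≠ v → DAdj A u v
def IndF (T : Finset V) : Prop := ∀ u ∈ T, ∀ v ∈ T, u ≠ v → ¬ DAdj A u v

noncomputable def cb (W : Set V) : ℕ :=
  sSup {n | ∃ T : Finset V, ↑T ⊆ W ∧ CliqF A T ∧ T.card = n}
noncomputable def ib (W : Set V) : ℕ :=
  sSup {n | ∃ T : Finset V, ↑T ⊆ W ∧ IndF A T ∧ T.card = n}

lemma cb_bdd (W : Set V) : BddAbove {n | ∃ T : Finset V, ↑T ⊆ W ∧ CliqF A T ∧ T.card = n} :=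
  ⟨Fintype.card V, fun _ ⟨T, _, _, hc⟩ => hc ▸ T.card_le_univ⟩
lemma ib_bdd (W : Set V) : BddAbove {n | ∃ T : Finset V, ↑T ⊆ W ∧ IndF A T ∧ T.card = n} :=
  ⟨Fintype.card V, fun _ ⟨T, _, _, hc⟩ => hc ▸ T.card_le_univ⟩

lemma empty_mem_cb (W : Set V) : 0 ∈ {n | ∃ T : Finset V, ↑T ⊆ W ∧ CliqF A T ∧ T.card = n} :=
  ⟨∅, by simp, fun u hu => absurd hu (Finset.notMem_empty u), rfl⟩
lemma empty_mem_ib (W : Set V) : 0 ∈ {n | ∃ T : Finset V, ↑T ⊆ W ∧ IndF A T ∧ T.card = n} :=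
  ⟨∅, by simp, fun u hu => absurd hu (Finset.notMem_empty u), rfl⟩

lemma le_cb {W : Set V} {T : Finset V} (hT : ↑T ⊆ W) (hc : CliqF A T) : T.card ≤ cb A W :=
  le_csSup (cb_bdd A W) ⟨T, hT, hc, rfl⟩
lemma le_ib {W : Set V} {T : Finset V} (hT : ↑T ⊆ W) (hc : IndF A T) : T.card ≤ ib A W :=
  le_csSup (ib_bdd A W) ⟨T, hT, hc, rfl⟩

lemma ib_mono {W W' : Set V} (h : W' ⊆ W) : ib A W' ≤ ib A W :=
  csSup_le_csSup (ib_bdd A W) ⟨0, empty_mem_ib A W'⟩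
    (fun n ⟨T, hT, hi, hc⟩ => ⟨T, fun x hx => h (hT hx), hi, hc⟩)

lemma cb_exists (W : Set V) :
    ∃ T : Finset V, ↑T ⊆ W ∧ CliqF A T ∧ T.card = cb A W := by
  have := Nat.sSup_mem ⟨0, empty_mem_cb A W⟩ (cb_bdd A W)
  obtain ⟨T, h1, h2, h3⟩ := this
  exact ⟨T, h1, h2, h3⟩
lemma ib_exists (W : Set V) :
    ∃ T : Finset V, ↑T ⊆ W ∧ IndF A T ∧ T.card = ib A W := by
  have := Nat.sSup_mem ⟨0, empty_mem_ib A W⟩ (ib_bdd A W)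
  obtain ⟨T, h1, h2, h3⟩ := this
  exact ⟨T, h1, h2, h3⟩

def GoodCover (W : Set V) : Prop :=
  ∃ f : V → ℕ, (∀ u ∈ W, ∀ v ∈ W, u ≠ v → f u = f v → DAdj A u v) ∧ ∀ u ∈ W, f u < ib A W

def PerfDi : Prop :=
  ∀ W : Set V, ∃ f : V → ℕ,
    (∀ u ∈ W, ∀ v ∈ W, u ≠ v → DAdj A u v → f u ≠ f v) ∧ ∀ u ∈ W, f u < cb A W

lemma all_ones {β : Type*} (s : Finset β) (F : β → ℕ) (h1 : ∀ b ∈ s, F b ≤ 1)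
    (hsum : ∑ b ∈ s, F b = s.card) : ∀ b ∈ s, F b = 1 := by
  classical
  intro b hb
  by_contra h
  have hb0 : F b = 0 := by have := h1 b hb; omega
  have h2 : ∑ x ∈ s, F x = ∑ x ∈ s.erase b, F x := by
    rw [← Finset.add_sum_erase s F hb, hb0, zero_add]
  have h3 : ∑ x ∈ s.erase b, F x ≤ (s.erase b).card * 1 :=
    Finset.sum_le_card_nsmul _ _ 1 (fun x hx => h1 x (Finset.mem_of_mem_erase hx))
  have h4 : (s.erase b).card = s.card - 1 := Finset.card_erase_of_mem hb
  have h5 : 1 ≤ s.card := Finset.card_pos.2 ⟨b, hb⟩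
  omega

lemma one_zero {β : Type*} (s : Finset β) (F : β → ℕ) (h1 : ∀ b ∈ s, F b ≤ 1)
    (hsum : ∑ b ∈ s, F b + 1 = s.card) :
    ∃ b0 ∈ s, F b0 = 0 ∧ ∀ b ∈ s, b ≠ b0 → F b = 1 := by
  classical
  have hzero : ∃ b0 ∈ s, F b0 = 0 := by
    by_contra h
    push_neg at h
    have hall : ∀ b ∈ s, F b = 1 := fun b hb => by have := h1 b hb; have := h b hb; omega
    have : ∑ b ∈ s, F b = s.card := by
      rw [Finset.sum_congr rfl hall]; simp
    omega
  obtain ⟨b0, hb0s, hb00⟩ := hzero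
  refine ⟨b0, hb0s, hb00, ?_⟩
  intro b hb hne
  have hrw : ∑ x ∈ s, F x = ∑ x ∈ s.erase b0, F x := by
    rw [← Finset.add_sum_erase s F hb0s, hb00, zero_add]
  have h4 : (s.erase b0).card = s.card - 1 := Finset.card_erase_of_mem hb0s
  have h5 : 1 ≤ s.card := Finset.card_pos.2 ⟨b0, hb0s⟩
  exact all_ones (s.erase b0) F (fun x hx => h1 x (Finset.mem_of_mem_erase hx))
    (by omega) b (Finset.mem_erase.2 ⟨hne, hb⟩)

lemma inter_card_le_one [DecidableEq V] {T C : Finset V} (hi : IndF A T) (hc : CliqF A C) :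
    (T ∩ C).card ≤ 1 := by
  by_contra h
  push_neg at h
  obtain ⟨u, hu, v, hv, huv⟩ := Finset.one_lt_card.1 h
  have hu' := Finset.mem_inter.1 hu
  have hv' := Finset.mem_inter.1 hv
  exact hi u hu'.1 v hv'.1 huv (hc u hu'.2 v hv'.2 huv)

set_option maxHeartbeats 3200000 in
theorem goodCover_all (hperf : PerfDi A) (W : Set V) : GoodCover A W := by
  classical
  by_contra hbad0
  -- minimal counterexample
  set NS := {n | ∃ W : Set V, ¬ GoodCover A W ∧ W.ncard = n} with hNS
  have hNSne : NS.Nonempty := ⟨W.ncard, W, hbad0, rfl⟩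
  obtain ⟨W, hbad, hWn⟩ := Nat.sInf_mem hNSne
  have hmin : ∀ W' : Set V, W' ⊂ W → GoodCover A W' := by
    intro W' hss
    by_contra h
    have h1 : W'.ncard ∈ NS := ⟨W', h, rfl⟩
    have h2 : W'.ncard < W.ncard := Set.ncard_lt_ncard hss W.toFinite
    have := Nat.sInf_le h1
    omega
  clear hbad0 hWn
  set w := ib A W with hwdef
  set a := cb A W with hadef
  -- W nonempty
  have hWne : W.Nonempty := by
    rcases W.eq_empty_or_nonempty with h | h
    · exfalso; exact hbad ⟨fun _ => 0, by simp [h], by simp [h]⟩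
    · exact h
  have singleton_clique : ∀ v : V, CliqF A {v} := by
    intro v u hu x hx hne
    simp only [Finset.mem_singleton] at hu hx
    exact absurd (hu.trans hx.symm) hne
  have singleton_ind : ∀ v : V, IndF A {v} := by
    intro v u hu x hx hne
    simp only [Finset.mem_singleton] at hu hx
    exact absurd (hu.trans hx.symm) hne
  have hw1 : 1 ≤ w := by
    obtain ⟨v, hv⟩ := hWne
    have := le_ib A (W := W) (T := {v}) (by simpa using hv) (singleton_ind v)
    simpa using this
  have ha1 : 1 ≤ a := by
    obtain ⟨v, hv⟩ := hWne
    have := le_cb A (W := W) (T := {v}) (by simpa using hv) (singleton_clique v)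
    simpa using this
  -- easy bound  |W| ≤ a * w
  have hcard_le : W.ncard ≤ a * w := by
    obtain ⟨f, hf1, hf2⟩ := hperf W
    have hfib : W.toFinset.card =
        ∑ c ∈ Finset.range a, (W.toFinset.filter (fun u => f u = c)).card :=
      Finset.card_eq_sum_card_fiberwise (fun u hu => by
        simp only [Finset.mem_coe, Finset.mem_range]
        exact hf2 u (Set.mem_toFinset.1 hu))
    have heach : ∀ c ∈ Finset.range a, (W.toFinset.filter (fun u => f u = c)).card ≤ w := by
      intro c _
      apply le_ib A
      · intro x hx
        simp only [Finset.coe_filter, Set.mem_setOf_eq] at hx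
        exact Set.mem_toFinset.1 hx.1
      · intro u hu v hv huv hadj
        simp only [Finset.mem_filter, Set.mem_toFinset] at hu hv
        exact hf1 u hu.1 v hv.1 huv hadj (hu.2.trans hv.2.symm)
    calc W.ncard = W.toFinset.card := Set.ncard_eq_toFinset_card' W
      _ ≤ ∑ c ∈ Finset.range a, w := by rw [hfib]; exact Finset.sum_le_sum heach
      _ = a * w := by simp [Finset.sum_const, Finset.card_range, mul_comm]
  -- maximum clique S0
  obtain ⟨S0, hS0W, hS0c, hS0card⟩ := cb_exists A W
  have e : ↥S0 ≃ Fin a := S0.equivFin.trans (finCongr hS0card)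
  set vf : Fin a → V := fun i => ((e.symm i : ↥S0) : V) with hvf
  have hvf_mem : ∀ i, vf i ∈ S0 := fun i => (e.symm i).2
  have hvf_memW : ∀ i, vf i ∈ W := fun i => hS0W (hvf_mem i)
  have hvf_inj : Function.Injective vf := fun i j h =>
    e.symm.injective (Subtype.ext h)
  have hvf_surj : ∀ x ∈ S0, ∃ i, vf i = x := fun x hx => ⟨e ⟨x, hx⟩, by simp [hvf]⟩
  -- covers of W minus a vertex, with all classes nonempty
  have hWv : ∀ i : Fin a, ∃ g : V → ℕ,
      (∀ u ∈ W \ {vf i}, ∀ v ∈ W \ {vf i}, u ≠ v → g u = g v → DAdj A u v) ∧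
      (∀ u ∈ W \ {vf i}, g u < w) ∧
      (∀ c, c < w → ∃ u ∈ W, u ≠ vf i ∧ g u = c) := by
    intro i
    have hvW : vf i ∈ W := hvf_memW i
    have hss : W \ {vf i} ⊂ W := Set.sdiff_singleton_ssubset.2 hvW
    obtain ⟨g, hg1, hg2⟩ := hmin _ hss
    have hibm : ib A (W \ {vf i}) ≤ w := ib_mono A Set.diff_subset
    refine ⟨g, hg1, fun u hu => lt_of_lt_of_le (hg2 u hu) hibm, ?_⟩
    intro c hc
    by_contra hno
    push_neg at hno
    apply hbad
    refine ⟨fun x => if x = vf i then c else g x, ?_, ?_⟩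
    · intro u hu v hv huv heq
      by_cases hui : u = vf i
      · have hvi : v ≠ vf i := fun h => huv (hui.trans h.symm)
        simp only [hui, if_pos rfl, if_neg hvi] at heq
        exact absurd heq.symm (hno v hv hvi)
      · by_cases hvi : v = vf i
        · simp only [if_neg hui, hvi, if_pos rfl] at heq
          exact absurd heq (hno u hu hui)
        · simp only [if_neg hui, if_neg hvi] at heq
          exact hg1 u ⟨hu, hui⟩ v ⟨hv, hvi⟩ huv heq
    · intro u hu
      by_cases hui : u = vf i
      · simpa [hui] using hc
      · simp only [if_neg hui]
        exact lt_of_lt_of_le (hg2 u ⟨hu, hui⟩) hibm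
  choose g hg1 hg2 hg3 using hWv
  -- the α·ω+1 cliques
  set SS : Option (Fin a × Fin w) → Finset V := fun j =>
    match j with
    | none => S0
    | some (i, c) => W.toFinset.filter (fun u => u ≠ vf i ∧ g i u = (c : ℕ)) with hSS
  have hSS_sub : ∀ j, ↑(SS j) ⊆ W := by
    intro j
    cases j with
    | none => exact hS0W
    | some ic =>
      intro x hx
      obtain ⟨i, c⟩ := ic
      simp only [hSS, Finset.coe_filter, Set.mem_setOf_eq] at hx
      exact Set.mem_toFinset.1 hx.1
  have hSS_cliq : ∀ j, CliqF A (SS j) := by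
    intro j
    cases j with
    | none => exact hS0c
    | some ic =>
      obtain ⟨i, c⟩ := ic
      intro u hu v hv huv
      simp only [hSS, Finset.mem_filter, Set.mem_toFinset] at hu hv
      exact hg1 i u ⟨hu.1, hu.2.1⟩ v ⟨hv.1, hv.2.1⟩ huv (hu.2.2.trans hv.2.2.symm)
  have hSS_ne : ∀ j, (SS j).Nonempty := by
    intro j
    cases j with
    | none =>
      show S0.Nonempty
      exact Finset.card_pos.1 (by rw [hS0card, ← hadef]; omega)
    | some ic =>
      obtain ⟨i, c⟩ := ic
      obtain ⟨u, huW, hune, huc⟩ := hg3 i (c : ℕ) c.isLt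
      exact ⟨u, by simp only [hSS, Finset.mem_filter, Set.mem_toFinset]; exact ⟨huW, hune, huc⟩⟩
  -- the independent transversals
  have hKK : ∀ j, ∃ T : Finset V, ↑T ⊆ W ∧ IndF A T ∧ T.card = w ∧ T ∩ SS j = ∅ := by
    intro j
    set Q := SS j with hQ
    obtain ⟨q, hq⟩ := hSS_ne j
    have hqW : q ∈ W := hSS_sub j hq
    have hss : W \ ↑Q ⊂ W := by
      refine (Set.ssubset_iff_of_subset Set.diff_subset).2 ⟨q, hqW, ?_⟩
      simp [hq, hQ]
    have hibQ : w ≤ ib A (W \ ↑Q) := by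
      by_contra hlt
      push_neg at hlt
      obtain ⟨g', hg'1, hg'2⟩ := hmin _ hss
      apply hbad
      refine ⟨fun x => if x ∈ Q then w - 1 else g' x, ?_, ?_⟩
      · intro u hu v hv huv heq
        by_cases huQ : u ∈ Q
        · by_cases hvQ : v ∈ Q
          · exact hSS_cliq j u huQ v hvQ huv
          · exfalso
            simp only [if_pos huQ, if_neg hvQ] at heq
            have := lt_of_lt_of_le (hg'2 v ⟨hv, hvQ⟩) (Nat.le_of_lt_succ (by omega : ib A (W \ ↑Q) < w - 1 + 1))
            omega
        · by_cases hvQ : v ∈ Q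
          · exfalso
            simp only [if_neg huQ, if_pos hvQ] at heq
            have := lt_of_lt_of_le (hg'2 u ⟨hu, huQ⟩) (Nat.le_of_lt_succ (by omega : ib A (W \ ↑Q) < w - 1 + 1))
            omega
          · simp only [if_neg huQ, if_neg hvQ] at heq
            exact hg'1 u ⟨hu, huQ⟩ v ⟨hv, hvQ⟩ huv heq
      · intro u hu
        by_cases huQ : u ∈ Q
        · simp only [if_pos huQ]; omega
        · simp only [if_neg huQ]
          have := hg'2 u ⟨hu, huQ⟩
          omega
    obtain ⟨T', hT'W, hT'i, hT'c⟩ := ib_exists A (W \ ↑Q)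
    obtain ⟨T, hTsub, hTcard⟩ := Finset.exists_subset_card_eq (s := T') (n := w) (by omega)
    refine ⟨T, ?_, ?_, hTcard, ?_⟩
    · intro x hx
      exact (hT'W (hTsub hx)).1
    · intro u hu v hv huv
      exact hT'i u (hTsub hu) v (hTsub hv) huv
    · rw [Finset.eq_empty_iff_forall_notMem]
      intro x hx
      have hx' := Finset.mem_inter.1 hx
      exact (hT'W (hTsub hx'.1)).2 hx'.2
  choose KK hKW hKind hKcard hKdisj using hKK
  -- row counting
  have hrow : ∀ T : Finset V, ↑T ⊆ W → ∀ i : Fin a,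
      ∑ c : Fin w, (T ∩ SS (some (i, c))).card = (T.erase (vf i)).card := by
    intro T hTW i
    have hfib : (T.erase (vf i)).card =
        ∑ c ∈ Finset.range w, ((T.erase (vf i)).filter (fun u => g i u = c)).card := by
      apply Finset.card_eq_sum_card_fiberwise
      intro u hu
      have hu' := Finset.mem_erase.1 hu
      simp only [Finset.mem_coe, Finset.mem_range]
      exact hg2 i u ⟨hTW hu'.2, hu'.1⟩
    have heq2 : ∀ c : Fin w, T ∩ SS (some (i, c)) =
        (T.erase (vf i)).filter (fun u => g i u = (c : ℕ)) := by
      intro c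
      ext u
      simp only [hSS, Finset.mem_inter, Finset.mem_filter, Finset.mem_erase,
        Set.mem_toFinset]
      constructor
      · rintro ⟨hT, _, hne, hc⟩
        exact ⟨⟨hne, hT⟩, hc⟩
      · rintro ⟨⟨hne, hT⟩, hc⟩
        exact ⟨hT, hTW hT, hne, hc⟩
    calc ∑ c : Fin w, (T ∩ SS (some (i, c))).card
        = ∑ c : Fin w, ((T.erase (vf i)).filter (fun u => g i u = (c : ℕ))).card :=
          Finset.sum_congr rfl (fun c _ => by rw [heq2 c])
      _ = ∑ c ∈ Finset.range w, ((T.erase (vf i)).filter (fun u => g i u = c)).card :=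
          Fin.sum_univ_eq_sum_range (fun c => ((T.erase (vf i)).filter (fun u => g i u = c)).card) w
      _ = (T.erase (vf i)).card := hfib.symm
  -- unique missed clique
  have hMM : ∀ T : Finset V, ↑T ⊆ W → IndF A T → T.card = w →
      ∀ j1 j2, T ∩ SS j1 = ∅ → T ∩ SS j2 = ∅ → j1 = j2 := by
    intro T hTW hTi hTc j1 j2 hj1 hj2
    have hle1 : ∀ j, (T ∩ SS j).card ≤ 1 := fun j => inter_card_le_one A hTi (hSS_cliq j)
    by_cases hS0T : T ∩ SS none = ∅
    · have hvnot : ∀ i, vf i ∉ T := by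
        intro i hiT
        have h2 : vf i ∈ T ∩ SS none := Finset.mem_inter.2 ⟨hiT, hvf_mem i⟩
        simp [hS0T] at h2
      have hones : ∀ i c, (T ∩ SS (some (i, c))).card = 1 := by
        intro i c
        have h1 := hrow T hTW i
        rw [Finset.erase_eq_of_notMem (hvnot i), hTc] at h1
        exact all_ones Finset.univ (fun c : Fin w => (T ∩ SS (some (i, c))).card)
          (fun c _ => by exact hle1 (some (i, c))) (by simpa using h1) c (Finset.mem_univ c)
      have hnone : ∀ j', T ∩ SS j' = ∅ → j' = none := by
        intro j' hj'
        cases j' with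
        | none => rfl
        | some ic =>
          obtain ⟨i, c⟩ := ic
          exfalso
          have h2 := hones i c
          rw [hj'] at h2
          simp at h2
      rw [hnone j1 hj1, hnone j2 hj2]
    · obtain ⟨v0, hv0⟩ := Finset.nonempty_of_ne_empty hS0T
      have hv0T := (Finset.mem_inter.1 hv0).1
      have hv0S0 : v0 ∈ S0 := (Finset.mem_inter.1 hv0).2
      obtain ⟨i0, hi0⟩ := hvf_surj v0 hv0S0
      have hT0eq : T ∩ SS none = {v0} := by
        have hcle := hle1 none
        have hge : 1 ≤ (T ∩ SS none).card := Finset.card_pos.2 ⟨v0, hv0⟩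
        obtain ⟨y, hy⟩ := Finset.card_eq_one.1 (le_antisymm hcle hge)
        rw [hy] at hv0 ⊢
        simp only [Finset.mem_singleton] at hv0
        rw [hv0]
      have hrows_ne : ∀ i, i ≠ i0 → vf i ∉ T := by
        intro i hne hiT
        have h2 : vf i ∈ T ∩ SS none := Finset.mem_inter.2 ⟨hiT, hvf_mem i⟩
        rw [hT0eq, Finset.mem_singleton] at h2
        exact hne (hvf_inj (by rw [h2, ← hi0]))
      have hrow0 := hrow T hTW i0
      rw [hi0] at hrow0
      have herase : (T.erase v0).card = w - 1 := by
        rw [Finset.card_erase_of_mem hv0T, hTc]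
      obtain ⟨c0, _, hc0z, hc0o⟩ := one_zero Finset.univ
        (fun c : Fin w => (T ∩ SS (some (i0, c))).card)
        (fun c _ => by exact hle1 (some (i0, c)))
        (by rw [hrow0, herase]; simp only [Finset.card_univ, Fintype.card_fin]; omega)
      have hsome : ∀ j', T ∩ SS j' = ∅ → j' = some (i0, c0) := by
        intro j' hj'
        cases j' with
        | none => exact absurd hj' hS0T
        | some ic =>
          obtain ⟨i, c⟩ := ic
          by_cases hii : i = i0
          · subst hii
            by_cases hcc : c = c0
            · rw [hcc]
            · exfalso
              have h2 : (T ∩ SS (some (i, c))).card = 1 := hc0o c (Finset.mem_univ c) hcc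
              rw [hj'] at h2; simp at h2
          · exfalso
            have h1 := hrow T hTW i
            rw [Finset.erase_eq_of_notMem (hrows_ne i hii), hTc] at h1
            have h2 : (T ∩ SS (some (i, c))).card = 1 := all_ones Finset.univ
              (fun c : Fin w => (T ∩ SS (some (i, c))).card)
              (fun c _ => by exact hle1 (some (i, c)))
              (by simpa using h1) c (Finset.mem_univ c)
            rw [hj'] at h2; simp at h2
      rw [hsome j1 hj1, hsome j2 hj2]
  -- matrix entries
  have hMjj : ∀ j, (SS j ∩ KK j).card = 0 := fun j => by
    rw [Finset.inter_comm, hKdisj j, Finset.card_empty]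
  have hMij : ∀ i j, i ≠ j → (SS i ∩ KK j).card = 1 := by
    intro i j hne
    have hle : (SS i ∩ KK j).card ≤ 1 := by
      rw [Finset.inter_comm]
      exact inter_card_le_one A (hKind j) (hSS_cliq i)
    have hpos : (SS i ∩ KK j).card ≠ 0 := by
      intro h0
      have hempty : KK j ∩ SS i = ∅ := by
        rw [Finset.inter_comm]; exact Finset.card_eq_zero.1 h0
      exact hne (hMM (KK j) (hKW j) (hKind j) (hKcard j) i j hempty (hKdisj j))
    omega
  -- linear algebra
  haveI : Fintype ↥W := Fintype.ofFinite _
  have hli : LinearIndependent ℚ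
      (fun (j : Option (Fin a × Fin w)) (u : ↥W) => if (u : V) ∈ SS j then (1 : ℚ) else 0) := by
    rw [Fintype.linearIndependent_iff]
    intro co hco
    have hkey : ∀ j, ∑ i : Option (Fin a × Fin w), co i * ((SS i ∩ KK j).card : ℚ) = 0 := by
      intro j
      have h0 : ∀ u ∈ KK j, ∑ i : Option (Fin a × Fin w),
          co i * (if u ∈ SS i then (1:ℚ) else 0) = 0 := by
        intro u hu
        have huW : u ∈ W := hKW j hu
        have h1 := congrFun hco ⟨u, huW⟩
        simpa [Finset.sum_apply, Pi.smul_apply, smul_eq_mul] using h1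
      have hsum0 : ∑ u ∈ KK j, ∑ i : Option (Fin a × Fin w),
          co i * (if u ∈ SS i then (1:ℚ) else 0) = 0 := Finset.sum_eq_zero h0
      rw [Finset.sum_comm] at hsum0
      calc ∑ i : Option (Fin a × Fin w), co i * ((SS i ∩ KK j).card : ℚ)
          = ∑ i : Option (Fin a × Fin w), ∑ u ∈ KK j,
              co i * (if u ∈ SS i then (1:ℚ) else 0) := by
            refine Finset.sum_congr rfl (fun i _ => ?_)
            rw [← Finset.mul_sum]
            congr 1
            have hfe : (KK j).filter (fun u => u ∈ SS i) = SS i ∩ KK j := by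
              rw [Finset.filter_mem_eq_inter, Finset.inter_comm]
            rw [Finset.sum_boole, hfe]
        _ = 0 := hsum0
    have hs : ∀ j, ∑ i ∈ Finset.univ.erase j, co i = 0 := by
      intro j
      have h1 := hkey j
      rw [← Finset.add_sum_erase Finset.univ _ (Finset.mem_univ j), hMjj j] at h1
      simp only [Nat.cast_zero, mul_zero, zero_add] at h1
      calc ∑ i ∈ Finset.univ.erase j, co i
          = ∑ i ∈ Finset.univ.erase j, co i * ((SS i ∩ KK j).card : ℚ) := by
            refine (Finset.sum_congr rfl (fun i hi => ?_))
            rw [hMij i j (Finset.mem_erase.1 hi).1]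
            simp
        _ = 0 := h1
    have hcoj : ∀ j, co j = ∑ i : Option (Fin a × Fin w), co i := by
      intro j
      have h2 := Finset.add_sum_erase Finset.univ co (Finset.mem_univ j)
      rw [hs j, add_zero] at h2
      exact h2
    set t := ∑ i : Option (Fin a × Fin w), co i with ht
    have hcardi : Fintype.card (Option (Fin a × Fin w)) = a * w + 1 := by
      simp [Fintype.card_option, Fintype.card_prod]
    have h1 : t = (a * w + 1 : ℚ) * t := by
      calc t = ∑ i : Option (Fin a × Fin w), co i := rfl
        _ = ∑ _i : Option (Fin a × Fin w), t :=
            Finset.sum_congr rfl (fun i _ => hcoj i)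
        _ = (Fintype.card (Option (Fin a × Fin w)) : ℚ) * t := by
            rw [Finset.sum_const, Finset.card_univ, nsmul_eq_mul]
        _ = (a * w + 1 : ℚ) * t := by rw [hcardi]; push_cast; ring
    have h2 : (a * w : ℚ) * t = 0 := by linarith
    have h3 : (a * w : ℚ) ≠ 0 := by
      have : a * w ≠ 0 := by positivity
      exact_mod_cast this
    have ht0 : t = 0 := (mul_eq_zero.1 h2).resolve_left h3
    intro i
    rw [hcoj i]
    exact ht0
  have hle := hli.fintype_card_le_finrank
  rw [Module.finrank_pi] at hle
  have hcardW : Fintype.card ↥W = W.ncard := by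
    rw [Set.ncard_eq_toFinset_card', Set.toFinset_card]
  have hcardi : Fintype.card (Option (Fin a × Fin w)) = a * w + 1 := by
    simp [Fintype.card_option, Fintype.card_prod]
  omega


end BEaux
namespace BEaux
variable {V : Type*} (A : V → V → Prop)

theorem mainBE [Finite V] (hTT : ¬ HasInducedTransitiveTriangle A) (hp : PerfDi A) :
    BEProperty A := by
  classical
  intro S hS
  haveI : Fintype V := Fintype.ofFinite V
  have hSfin : S.Finite := Set.toFinite S
  have hScard : S.ncard = ib A Set.univ := by
    apply le_antisymm
    · have h1 := le_ib A (W := Set.univ) (T := hSfin.toFinset)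
        (by simp) (fun u hu v hv huv => hS.1 u (by simpa using hu) v (by simpa using hv) huv)
      rwa [Set.ncard_eq_toFinset_card S hSfin]
    · obtain ⟨T, _, hTi, hTc⟩ := ib_exists A Set.univ
      have h2 : IsStable A ↑T := fun u hu v hv huv => hTi u hu v hv huv
      have := hS.2 ↑T h2
      rwa [Set.ncard_coe_finset, hTc] at this
  set α := ib A Set.univ with hα
  obtain ⟨f, hf1, hf2⟩ := goodCover_all A hp Set.univ
  have hf1' : ∀ u v : V, u ≠ v → f u = f v → DAdj A u v :=
    fun u v h h2 => hf1 u trivial v trivial h h2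
  have hf2' : ∀ v : V, f v < α := fun v => hf2 v trivial
  have hfinjS : ∀ s ∈ S, ∀ s' ∈ S, f s = f s' → s = s' := by
    intro s hs' s' hs'' heq
    by_contra hne
    exact hS.1 s hs' s' hs'' hne (hf1' s s' hne heq)
  have hsurj : ∀ v : V, ∃ s ∈ S, f s = f v := by
    have hIcard : (hSfin.toFinset.image f).card = α := by
      rw [Finset.card_image_of_injOn (fun x hx y hy =>
        hfinjS x (by simpa using hx) y (by simpa using hy)),
        ← Set.ncard_eq_toFinset_card S hSfin, hScard]
    have hIsub : hSfin.toFinset.image f ⊆ Finset.range α := by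
      intro c hc
      obtain ⟨s, _, rfl⟩ := Finset.mem_image.1 hc
      simpa using hf2' s
    have hIeq : hSfin.toFinset.image f = Finset.range α :=
      Finset.eq_of_subset_of_card_le hIsub (by rw [hIcard, Finset.card_range])
    intro v
    have hv : f v ∈ Finset.range α := by simpa using hf2' v
    rw [← hIeq] at hv
    obtain ⟨s, hsmem, heq⟩ := Finset.mem_image.1 hv
    exact ⟨s, by simpa using hsmem, heq⟩
  have hlist : ∀ s : V, s ∈ S → ∃ l : List V,
      (∀ v : V, v ∈ l ↔ f v = f s) ∧ l.Nodup ∧ l.Chain' A ∧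
      (l.head? = some s ∨ l.getLast? = some s) := by
    intro s hsS
    set F := Finset.univ.filter (fun v => f v = f s) with hF
    have hmemF : ∀ v, v ∈ F ↔ f v = f s := by
      intro v; simp [hF]
    obtain ⟨p, hperm, hchain, hend⟩ := ham_endpoint hTT F.toList F.nodup_toList
      (fun u hu w hw huw => hf1' u w huw
        (((hmemF u).1 (Finset.mem_toList.1 hu)).trans ((hmemF w).1 (Finset.mem_toList.1 hw)).symm))
      s (Finset.mem_toList.2 ((hmemF s).2 rfl))
    refine ⟨p, ?_, hperm.nodup_iff.2 F.nodup_toList, hchain, hend⟩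
    intro v
    rw [hperm.mem_iff, Finset.mem_toList, hmemF]
  choose! L hL1 hL2 hL3 hL4 using hlist
  have hself : ∀ s ∈ S, s ∈ L s := fun s hs' => (hL1 s hs' s).2 rfl
  refine ⟨L '' S, ⟨⟨⟨?_, ?_⟩, ?_⟩, ?_⟩⟩
  · rintro l ⟨s, hsS, rfl⟩
    exact ⟨List.ne_nil_of_mem (hself s hsS), hL2 s hsS, hL3 s hsS⟩
  · intro v
    obtain ⟨s, hsS, hfs⟩ := hsurj v
    refine ⟨L s, ⟨⟨s, hsS, rfl⟩, (hL1 s hsS v).2 hfs.symm⟩, ?_⟩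
    rintro l ⟨⟨s', hs'S, rfl⟩, hvl⟩
    have h1 : f v = f s' := (hL1 s' hs'S v).1 hvl
    have : s' = s := hfinjS s' hs'S s hsS (h1.symm.trans hfs.symm)
    rw [this]
  · rintro l ⟨s, hsS, rfl⟩
    refine ⟨s, ⟨hself s hsS, hsS⟩, ?_⟩
    rintro x ⟨hxl, hxS⟩
    exact hfinjS x hxS s hsS ((hL1 s hsS x).1 hxl)
  · rintro l ⟨s, hsS, rfl⟩ s' hs'l hs'S
    have : s' = s := hfinjS s' hs'S s hsS ((hL1 s hsS s').1 hs'l)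
    rw [this]
    exact hL4 s hsS

lemma perfDi_of_graphPerfect [Finite V] (hperf : GraphPerfect (underlyingGraph A)) :
    PerfDi A := by
  classical
  haveI : Fintype V := Fintype.ofFinite V
  intro W
  set G := underlyingGraph A with hG
  have hχ := hperf W
  have hcol : (G.induce W).Colorable (G.induce W).cliqueNum := by
    rw [← SimpleGraph.chromaticNumber_le_iff_colorable, hχ]
  set m := (G.induce W).cliqueNum with hm
  have hmcb : m ≤ cb A W := by
    have hrfl : m = sSup {n | ∃ s, (G.induce W).IsNClique n s} := rfl
    rw [hrfl]
    refine csSup_le ⟨0, ⟨∅, SimpleGraph.isNClique_empty.2 rfl⟩⟩ ?_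
    rintro n ⟨s, hs⟩
    have hcard : (s.image Subtype.val).card = n := by
      rw [Finset.card_image_of_injective _ Subtype.val_injective, hs.card_eq]
    rw [← hcard]
    apply le_cb A
    · intro x hx
      simp only [Finset.coe_image] at hx
      obtain ⟨y, _, rfl⟩ := hx
      exact y.2
    · intro u hu v hv huv
      obtain ⟨u', hu', rfl⟩ := Finset.mem_image.1 hu
      obtain ⟨v', hv', rfl⟩ := Finset.mem_image.1 hv
      have hne : u' ≠ v' := fun h => huv (by rw [h])
      have := hs.isClique hu' hv' hne
      exact (this : u'.1 ≠ v'.1 ∧ DAdj A u'.1 v'.1).2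
  obtain ⟨C⟩ := hcol
  refine ⟨fun v => if h : v ∈ W then (C ⟨v, h⟩ : ℕ) else 0, ?_, ?_⟩
  · intro u hu v hv hne hadj
    simp only [dif_pos hu, dif_pos hv]
    have hGadj : (G.induce W).Adj ⟨u, hu⟩ ⟨v, hv⟩ := by
      show G.Adj u v
      exact (⟨hne, hadj⟩ : u ≠ v ∧ DAdj A u v)
    have hC := C.valid hGadj
    intro h
    exact hC (Fin.val_injective h)
  · intro u hu
    simp only [dif_pos hu]
    exact lt_of_lt_of_le (C ⟨u, hu⟩).isLt hmcb

lemma perfDi_restrict [Finite V] (hp : PerfDi A) (W0 : Set V) :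
    PerfDi (fun a b : ↥W0 => A a.1 b.1) := by
  classical
  haveI : Fintype V := Fintype.ofFinite V
  haveI : Fintype ↥W0 := Fintype.ofFinite _
  intro W'
  obtain ⟨f, hf1, hf2⟩ := hp (Subtype.val '' W')
  refine ⟨fun u => f u.1, ?_, ?_⟩
  · intro u hu v hv hne hadj
    exact hf1 u.1 ⟨u, hu, rfl⟩ v.1 ⟨v, hv, rfl⟩ (fun h => hne (Subtype.ext h)) hadj
  · intro u hu
    have h1 := hf2 u.1 ⟨u, hu, rfl⟩
    have h2 : cb A (Subtype.val '' W') ≤ cb (fun a b : ↥W0 => A a.1 b.1) W' := by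
      refine csSup_le ⟨0, empty_mem_cb _ _⟩ ?_
      rintro n ⟨T, hTW, hTc, hTcard⟩
      have hsubW0 : ∀ x ∈ T, x ∈ W0 := by
        intro x hx
        obtain ⟨y, _, hyx⟩ := hTW hx
        exact hyx ▸ y.2
      set T' : Finset ↥W0 := T.subtype (· ∈ W0) with hT'
      have hT'card : T'.card = n := by
        rw [hT', Finset.card_subtype, Finset.filter_true_of_mem hsubW0, hTcard]
      rw [← hT'card]
      apply le_cb
      · intro x hx
        have hx' : x.1 ∈ T := by
          have := Finset.mem_coe.1 hx
          simpa [hT', Finset.mem_subtype] using this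
        obtain ⟨y, hyW', hyx⟩ := hTW hx'
        have hyx2 : y = x := Subtype.ext hyx
        exact hyx2 ▸ hyW'
      · intro u' hu' v' hv' hne
        simp only [hT', Finset.mem_subtype] at hu' hv'
        exact hTc u'.1 hu' v'.1 hv' (fun h => hne (Subtype.ext h))
    exact lt_of_lt_of_le h1 h2


end BEaux

/-- A digraph without induced transitive triangles whose underlying graph is perfect is
BE-diperfect. -/
theorem perfect_underlying_BEDiperfect {V : Type*} [Finite V] (A : V → V → Prop)
    (hirr : ∀ v, ¬ A v v) (hTT : ¬ HasInducedTransitiveTriangle A)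
    (hperf : GraphPerfect (underlyingGraph A)) :
    BEDiperfect A := by
  intro W0
  apply BEaux.mainBE
  · rintro ⟨x, y, z, h1, h2, h3, a1, a2, a3, n1, n2, n3⟩
    exact hTT ⟨x.1, y.1, z.1, fun h => h1 (Subtype.ext h), fun h => h2 (Subtype.ext h),
      fun h => h3 (Subtype.ext h), a1, a2, a3, n1, n2, n3⟩
  · exact BEaux.perfDi_restrict A (BEaux.perfDi_of_graphPerfect A hperf) W0
end

section
/- Let D be a digraph and v a universal vertex of D. If D − v satisfies the α-property, then D satisfies the α-property. -/
open Relation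

variable {V : Type*}

theorem my_insert_chain (A : V → V → Prop) (v : V) :
    ∀ l : List V, (∀ x ∈ l, A x v ∨ A v x) → l.Chain' A →
      ∃ l₁ l₂ : List V, l = l₁ ++ l₂ ∧ (l₁ ++ v :: l₂).Chain' A := by
  intro l
  induction l with
  | nil => intro _ _; exact ⟨[], [], rfl, List.isChain_singleton v⟩
  | cons x t ih =>
    intro hadj hch
    rcases hadj x List.mem_cons_self with hxv | hvx
    · obtain ⟨t₁, t₂, ht, hch'⟩ := ih (fun y hy => hadj y (List.mem_cons_of_mem x hy))
        hch.tail
      subst ht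
      refine ⟨x :: t₁, t₂, rfl, ?_⟩
      refine List.IsChain.cons hch' ?_
      intro y hy
      cases t₁ with
      | nil => simp at hy; subst hy; exact hxv
      | cons a t₁' =>
        simp at hy
        subst hy
        exact hch.rel_head
    · exact ⟨[], x :: t, rfl, List.IsChain.cons_cons hvx hch⟩

theorem my_insert (A : V → V → Prop) (v : V) (l : List V)
    (hadj : ∀ x ∈ l, A x v ∨ A v x) (hch : l.Chain' A) (hnd : l.Nodup)
    (hvl : v ∉ l) :
    ∃ l' : List V, l'.Chain' A ∧ l'.Nodup ∧ l' ≠ [] ∧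
      ∀ u, u ∈ l' ↔ u = v ∨ u ∈ l := by
  obtain ⟨l₁, l₂, rfl, hch'⟩ := my_insert_chain A v l hadj hch
  refine ⟨l₁ ++ v :: l₂, hch', ?_, by simp, by intro u; simp; tauto⟩
  rw [List.nodup_append] at hnd ⊢
  simp only [List.nodup_cons]
  refine ⟨hnd.1, ⟨fun hv => hvl (by simp [hv]), hnd.2.1⟩, ?_⟩
  intro a ha b hb hab
  subst hab
  rcases List.mem_cons.mp hb with rfl | hb
  · exact hvl (by simp [ha])
  · exact hnd.2.2 a ha a hb rfl

theorem my_redei (A : V → V → Prop) :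
    ∀ L : List V, L.Nodup →
      (∀ u ∈ L, ∀ w ∈ L, u ≠ w → A u w ∨ A w u) →
      ∃ l : List V, l.Chain' A ∧ l.Nodup ∧ ∀ u, u ∈ l ↔ u ∈ L := by
  intro L
  induction L with
  | nil => exact fun _ _ => ⟨[], List.isChain_nil, by simp, by simp⟩
  | cons x t ih =>
    intro hnd hsc
    obtain ⟨l, hch, hlnd, hmem⟩ := ih hnd.of_cons
      (fun u hu w hw => hsc u (List.mem_cons_of_mem x hu) w (List.mem_cons_of_mem x hw))
    have hxl : x ∉ l := fun hx => (List.nodup_cons.mp hnd).1 ((hmem x).mp hx)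
    have hadj : ∀ y ∈ l, A y x ∨ A x y := by
      intro y hy
      exact hsc y (List.mem_cons_of_mem x ((hmem y).mp hy)) x List.mem_cons_self
        (fun hyx => hxl (hyx ▸ hy))
    obtain ⟨l', h1, h2, h3, h4⟩ := my_insert A x l hadj hch hlnd hxl
    exact ⟨l', h1, h2, fun u => by rw [h4, List.mem_cons, hmem]⟩

/-- If `v` is a universal vertex of `D` and `D - v` satisfies the α-property, then `D`
satisfies the α-property. -/

theorem universal_alphaProperty {V : Type*} [Finite V] (A : V → V → Prop)
    (hirr : ∀ v, ¬ A v v) (v : V) (hu : IsUniversal A v)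
    (h : AlphaProperty (fun a b : {u : V // u ≠ v} => A a.1 b.1)) :
    AlphaProperty A := by
  intro S hS
  by_cases hvS : v ∈ S
  · -- Case 1 : v ∈ S, so S = {v} and A is semicomplete
    have hSv : S = {v} := by
      ext u
      simp only [Set.mem_singleton_iff]
      constructor
      · intro huS
        by_contra hne
        exact hS.1 u huS v hvS hne (hu u hne)
      · rintro rfl; exact hvS
    have hsemi : ∀ u w : V, u ≠ w → A u w ∨ A w u := by
      intro u w hne
      by_contra hc
      push_neg at hc
      have hst : IsStable A {u, w} := by
        rintro a (rfl | rfl) b (rfl | rfl) hab hadj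
        · exact hab rfl
        · rcases hadj with h1 | h1
          · exact hc.1 h1
          · exact hc.2 h1
        · rcases hadj with h1 | h1
          · exact hc.2 h1
          · exact hc.1 h1
        · exact hab rfl
      have hle := hS.2 {u, w} hst
      rw [hSv, Set.ncard_singleton, Set.ncard_pair hne] at hle
      omega
    have : Fintype V := Fintype.ofFinite V
    obtain ⟨l, hch, hnd, hmem⟩ := my_redei A (Finset.univ : Finset V).toList
      (Finset.nodup_toList _)
      (fun a _ b _ hab => hsemi a b hab)
    have hvl : v ∈ l := (hmem v).mpr (by simp)
    refine ⟨{l}, ⟨⟨?_, ?_⟩, ?_⟩⟩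
    · rintro m rfl
      exact ⟨List.ne_nil_of_mem hvl, hnd, hch⟩
    · intro u
      exact ⟨l, ⟨rfl, (hmem u).mpr (by simp)⟩, fun m hm => hm.1⟩
    · rintro m rfl
      refine ⟨v, ⟨hvl, hvS⟩, ?_⟩
      rintro s ⟨-, hsS⟩
      rw [hSv] at hsS
      exact hsS
  · -- Case 2 : v ∉ S
    have hSsub : ∀ s ∈ S, s ≠ v := fun s hs hsv => hvS (hsv ▸ hs)
    set S' : Set {u : V // u ≠ v} := {u | u.1 ∈ S} with hS'def
    have himg : Subtype.val '' S' = S := by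
      ext u
      constructor
      · rintro ⟨x, hx, rfl⟩; exact hx
      · intro hu'; exact ⟨⟨u, hSsub u hu'⟩, hu', rfl⟩
    have hcard : S'.ncard = S.ncard := by
      rw [← himg, Set.ncard_image_of_injective S' Subtype.val_injective]
    have hS'max : IsMaxStable (fun a b : {u : V // u ≠ v} => A a.1 b.1) S' := by
      constructor
      · intro a ha b hb hab hadj
        exact hS.1 a.1 ha b.1 hb (fun he => hab (Subtype.ext he)) hadj
      · intro T hT
        have hTim : IsStable A (Subtype.val '' T) := by
          rintro a ⟨x, hx, rfl⟩ b ⟨y, hy, rfl⟩ hab hadj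
          exact hT x hx y hy (fun he => hab (congrArg _ he)) hadj
        calc T.ncard = (Subtype.val '' T).ncard :=
              (Set.ncard_image_of_injective T Subtype.val_injective).symm
          _ ≤ S.ncard := hS.2 _ hTim
          _ = S'.ncard := hcard.symm
    obtain ⟨P₀, hP₀⟩ := h S' hS'max
    set f : List {u : V // u ≠ v} → List V := List.map Subtype.val with hfdef
    have finj : Function.Injective f := List.map_injective_iff.mpr Subtype.val_injective
    set Pm : Set (List V) := f '' P₀ with hPmdef
    have hPmdp : ∀ m ∈ P₀, IsDiPath A (f m) ∧ v ∉ f m := by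
      intro m hm
      obtain ⟨hne, hnd, hch⟩ := hP₀.1.1 m hm
      refine ⟨⟨fun he => hne (by rwa [hfdef, List.map_eq_nil_iff] at he),
        List.Nodup.map Subtype.val_injective hnd, (List.isChain_map _).mpr hch⟩, ?_⟩
      intro hv
      obtain ⟨x, _, hxv⟩ := List.mem_map.mp hv
      exact x.2 hxv
    have hSone : ∀ m ∈ P₀, ∃! s, s ∈ f m ∧ s ∈ S := by
      intro m hm
      obtain ⟨s', ⟨hs'm, hs'S⟩, hs'uniq⟩ := hP₀.2 m hm
      refine ⟨s'.1, ⟨List.mem_map.mpr ⟨s', hs'm, rfl⟩, hs'S⟩, ?_⟩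
      rintro t ⟨htm, htS⟩
      obtain ⟨x, hx, hxt⟩ := List.mem_map.mp htm
      have hxS : x ∈ S' := by rw [hS'def, Set.mem_setOf_eq, hxt]; exact htS
      have := hs'uniq x ⟨hx, hxS⟩
      rw [← hxt, this]
    -- find the path containing some vertex of S
    have hSne : S.Nonempty := by
      have h1 : IsStable A {v} := by
        rintro a rfl b rfl hab _
        exact hab rfl
      have hle := hS.2 {v} h1
      rw [Set.ncard_singleton] at hle
      exact Set.nonempty_of_ncard_ne_zero (by omega)
    obtain ⟨s₀, hs₀⟩ := hSne
    obtain ⟨l₀', ⟨hl₀'P, hv₀l₀'⟩, hm₀'uniq⟩ := hP₀.1.2 ⟨s₀, hSsub s₀ hs₀⟩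
    obtain ⟨⟨hl₀ne, hl₀nd, hl₀ch⟩, hvl₀⟩ := hPmdp l₀' hl₀'P
    have hadj : ∀ x ∈ f l₀', A x v ∨ A v x :=
      fun x hx => hu x (fun he => hvl₀ (he ▸ hx))
    obtain ⟨ln, hln_ch, hln_nd, hln_ne, hln_mem⟩ :=
      my_insert A v (f l₀') hadj hl₀ch hl₀nd hvl₀
    refine ⟨insert ln (Pm \ {f l₀'}), ⟨⟨?_, ?_⟩, ?_⟩⟩
    · rintro l (rfl | ⟨⟨m, hm, rfl⟩, -⟩)
      · exact ⟨hln_ne, hln_nd, hln_ch⟩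
      · exact (hPmdp m hm).1
    · intro u
      by_cases huv : u = v
      · subst huv
        refine ⟨ln, ⟨Set.mem_insert _ _, (hln_mem u).mpr (Or.inl rfl)⟩, ?_⟩
        rintro l ⟨hl, hul⟩
        rcases hl with rfl | ⟨⟨m, hm, rfl⟩, -⟩
        · rfl
        · exact absurd hul (hPmdp m hm).2
      · obtain ⟨m₀, ⟨hm₀P, hum₀⟩, hm₀uniq⟩ := hP₀.1.2 ⟨u, huv⟩
        by_cases hm0 : m₀ = l₀'
        · subst hm0
          refine ⟨ln, ⟨Set.mem_insert _ _,
            (hln_mem u).mpr (Or.inr (List.mem_map.mpr ⟨⟨u, huv⟩, hum₀, rfl⟩))⟩, ?_⟩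
          rintro l ⟨hl, hul⟩
          rcases hl with rfl | ⟨⟨m, hm, rfl⟩, hne⟩
          · rfl
          · exfalso
            obtain ⟨x, hx, hxu⟩ := List.mem_map.mp hul
            have hx' : x = ⟨u, huv⟩ := Subtype.ext hxu
            subst hx'
            exact hne (by rw [Set.mem_singleton_iff, hm₀uniq m ⟨hm, hx⟩])
        · refine ⟨f m₀, ⟨Set.mem_insert_of_mem _ ⟨⟨m₀, hm₀P, rfl⟩, ?_⟩,
            List.mem_map.mpr ⟨⟨u, huv⟩, hum₀, rfl⟩⟩, ?_⟩
          · simp only [Set.mem_singleton_iff]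
            exact fun he => hm0 (finj he)
          · rintro l ⟨hl, hul⟩
            rcases hl with rfl | ⟨⟨m, hm, rfl⟩, -⟩
            · exfalso
              rcases (hln_mem u).mp hul with rfl | hul₀
              · exact huv rfl
              · obtain ⟨x, hx, hxu⟩ := List.mem_map.mp hul₀
                have hx' : x = ⟨u, huv⟩ := Subtype.ext hxu
                subst hx'
                exact hm0 (hm₀uniq l₀' ⟨hl₀'P, hx⟩).symm
            · obtain ⟨x, hx, hxu⟩ := List.mem_map.mp hul
              have hx' : x = ⟨u, huv⟩ := Subtype.ext hxu
              subst hx'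
              rw [hm₀uniq m ⟨hm, hx⟩]
    · rintro l (rfl | ⟨⟨m, hm, rfl⟩, -⟩)
      · obtain ⟨t, ⟨htl, htS⟩, htuniq⟩ := hSone l₀' hl₀'P
        refine ⟨t, ⟨(hln_mem t).mpr (Or.inr htl), htS⟩, ?_⟩
        rintro y ⟨hyl, hyS⟩
        rcases (hln_mem y).mp hyl with rfl | hyl₀
        · exact absurd hyS hvS
        · exact htuniq y ⟨hyl₀, hyS⟩
      · exact hSone m hm
end

section
/- Let D be a digraph and v a universal vertex of D. Then D is α-diperfect if and only if D − v is α-diperfect. -/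
open Relation

variable {V : Type*}

lemma chain'_insert_aux {α : Type*} (A : α → α → Prop) (v : α) :
    ∀ l : List α, l.Chain' A → (∀ u ∈ l, A u v ∨ A v u) →
    ∃ l₁ l₂, l = l₁ ++ l₂ ∧ (l₁ ++ v :: l₂).Chain' A := by
  intro l
  induction l with
  | nil => exact fun _ _ => ⟨[], [], rfl, List.isChain_singleton v⟩
  | cons a t ih =>
    intro hc hadj
    rcases hadj a List.mem_cons_self with hav | hva
    · obtain ⟨t₁, t₂, ht, hch⟩ := ih hc.tail
        (fun u hu => hadj u (List.mem_cons_of_mem a hu))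
      cases t₁ with
      | nil =>
        refine ⟨[a], t, by simp, ?_⟩
        simp only [List.nil_append] at ht hch
        subst ht
        exact hch.cons (by simpa using hav)
      | cons b t₁' =>
        refine ⟨a :: b :: t₁', t₂, by simp [ht], ?_⟩
        have hab : A a b := by
          rw [ht] at hc
          exact (List.isChain_cons_cons.mp hc).1
        exact hch.cons (by simpa using hab)
    · exact ⟨[], a :: t, rfl, hc.cons (by simpa using hva)⟩

lemma insert_vertex {α : Type*} (A : α → α → Prop) (v : α) (l : List α)
    (hl : IsDiPath A l) (hv : v ∉ l) (hadj : ∀ u ∈ l, DAdj A u v) :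
    ∃ l', IsDiPath A l' ∧ l'.Perm (v :: l) := by
  obtain ⟨t₁, t₂, ht, hch⟩ := chain'_insert_aux A v l hl.2.2 hadj
  refine ⟨t₁ ++ v :: t₂, ⟨by simp, ?_, hch⟩, ?_⟩
  · have hperm : (t₁ ++ v :: t₂).Perm (v :: l) := by
      rw [ht]; exact List.perm_middle
    exact hperm.nodup_iff.mpr (List.nodup_cons.mpr ⟨hv, hl.2.1⟩)
  · rw [ht]; exact List.perm_middle

lemma redei_list {α : Type*} (A : α → α → Prop) :
    ∀ l : List α, l.Nodup → (∀ u ∈ l, ∀ w ∈ l, u ≠ w → DAdj A u w) →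
    ∃ l' : List α, l'.Perm l ∧ l'.Chain' A := by
  intro l
  induction l with
  | nil => exact fun _ _ => ⟨[], List.Perm.refl _, List.IsChain.nil⟩
  | cons a t ih =>
    intro hnd hsemi
    obtain ⟨l'', hperm, hch⟩ := ih (List.nodup_cons.mp hnd).2
      (fun u hu w hw huw => hsemi u (List.mem_cons_of_mem a hu)
        w (List.mem_cons_of_mem a hw) huw)
    have hadj : ∀ u ∈ l'', A u a ∨ A a u := by
      intro u hu
      have hut : u ∈ t := hperm.mem_iff.mp hu
      have hne : a ≠ u := fun h => (List.nodup_cons.mp hnd).1 (h ▸ hut)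
      rcases hsemi a List.mem_cons_self u (List.mem_cons_of_mem a hut) hne with h | h
      · exact Or.inr h
      · exact Or.inl h
    obtain ⟨t₁, t₂, ht, hch'⟩ := chain'_insert_aux A a l'' hch hadj
    refine ⟨t₁ ++ a :: t₂, ?_, hch'⟩
    calc (t₁ ++ a :: t₂).Perm (a :: (t₁ ++ t₂)) := List.perm_middle
      _ = a :: l'' := by rw [ht]
      _ |>.Perm (a :: t) := hperm.cons a

lemma alphaProperty_of_equiv {α β : Type*} (e : α ≃ β) {A : α → α → Prop}
    {B : β → β → Prop} (he : ∀ a b, A a b ↔ B (e a) (e b))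
    (hB : AlphaProperty B) : AlphaProperty A := by
  have hd : ∀ a b, DAdj A a b ↔ DAdj B (e a) (e b) := fun a b => or_congr (he a b) (he b a)
  intro S hS
  have hS' : IsMaxStable B (e '' S) := by
    constructor
    · rintro _ ⟨a, ha, rfl⟩ _ ⟨b, hb, rfl⟩ hne hadj
      exact hS.1 a ha b hb (fun h => hne (by rw [h])) ((hd a b).mpr hadj)
    · intro T hT
      have hst : IsStable A (e.symm '' T) := by
        rintro _ ⟨a, ha, rfl⟩ _ ⟨b, hb, rfl⟩ hne hadj
        refine hT a ha b hb (fun h => hne (by rw [h])) ?_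
        have := (hd (e.symm a) (e.symm b)).mp hadj
        simpa using this
      calc T.ncard = (e.symm '' T).ncard :=
            (Set.ncard_image_of_injective T e.symm.injective).symm
        _ ≤ S.ncard := hS.2 _ hst
        _ = (e '' S).ncard := (Set.ncard_image_of_injective S e.injective).symm
  obtain ⟨P', ⟨⟨hpath', hcover'⟩, hone'⟩⟩ := hB (e '' S) hS'
  refine ⟨(fun l => l.map e.symm) '' P', ⟨⟨?_, ?_⟩, ?_⟩⟩
  · rintro _ ⟨l', hl', rfl⟩
    obtain ⟨hne, hnd, hch⟩ := hpath' l' hl'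
    refine ⟨by simpa using hne, hnd.map e.symm.injective, ?_⟩
    refine (List.isChain_map _).mpr ?_
    exact hch.imp (fun a b h => by rw [he]; simpa using h)
  · intro a
    obtain ⟨l', ⟨hl'P, hal'⟩, huniq⟩ := hcover' (e a)
    refine ⟨l'.map e.symm, ⟨⟨l', hl'P, rfl⟩, ?_⟩, ?_⟩
    · exact List.mem_map.mpr ⟨e a, hal', by simp⟩
    · rintro _ ⟨⟨m', hm'P, rfl⟩, ham⟩
      have hmem : e a ∈ m' := by
        obtain ⟨b, hb, hba⟩ := List.mem_map.mp ham
        have : b = e a := by rw [← hba]; simp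
        rwa [this] at hb
      rw [huniq m' ⟨hm'P, hmem⟩]
  · rintro _ ⟨l', hl'P, rfl⟩
    obtain ⟨s', ⟨hs'l, hs'S⟩, hsuniq⟩ := hone' l' hl'P
    refine ⟨e.symm s', ⟨List.mem_map_of_mem hs'l, ?_⟩, ?_⟩
    · obtain ⟨a, ha, rfl⟩ := hs'S; simpa using ha
    · rintro t ⟨htl, htS⟩
      obtain ⟨b, hb, rfl⟩ := List.mem_map.mp htl
      rw [hsuniq b ⟨hb, ⟨e.symm b, htS, by simp⟩⟩]

lemma alphaProperty_of_universal {α : Type*} [Finite α] (A : α → α → Prop)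
    (v : α) (hu : IsUniversal A v)
    (h : AlphaProperty (fun a b : {u : α // u ≠ v} => A a.1 b.1)) :
    AlphaProperty A := by
  have hSfin : ∀ S : Set α, S.Finite := fun S => Set.toFinite S
  intro S hS
  by_cases hvS : v ∈ S
  · -- S = {v}, the digraph is semicomplete; use Rédei
    have hSv : S = {v} := by
      refine Set.eq_singleton_iff_unique_mem.mpr ⟨hvS, ?_⟩
      intro u hu'
      by_contra hne
      exact hS.1 u hu' v hvS hne (hu u hne)
    have hsemi : ∀ u w : α, u ≠ w → DAdj A u w := by
      intro u w hne
      by_contra hadj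
      have hst : IsStable A {u, w} := by
        rintro x (rfl | rfl) y (rfl | rfl) hxy hxyadj
        · exact hxy rfl
        · exact hadj hxyadj
        · exact hadj hxyadj.symm
        · exact hxy rfl
      have h2 : ({u, w} : Set α).ncard = 2 := Set.ncard_pair hne
      have := hS.2 _ hst
      rw [hSv, Set.ncard_singleton, h2] at this
      omega
    have hfin := Fintype.ofFinite α
    obtain ⟨l', hperm, hch⟩ := redei_list A Finset.univ.toList
      (Finset.nodup_toList _) (fun u _ w _ huw => hsemi u w huw)
    have hall : ∀ x : α, x ∈ l' := fun x => hperm.mem_iff.mpr (by simp)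
    refine ⟨{l'}, ⟨⟨?_, ?_⟩, ?_⟩⟩
    · rintro _ rfl
      exact ⟨List.ne_nil_of_mem (hall v), hperm.nodup_iff.mpr (Finset.nodup_toList _), hch⟩
    · intro u
      exact ⟨l', ⟨rfl, hall u⟩, fun m hm => hm.1⟩
    · rintro _ rfl
      refine ⟨v, ⟨hall v, hvS⟩, ?_⟩
      rintro t ⟨_, htS⟩
      rw [hSv] at htS
      exact htS
  · -- v ∉ S : lift an S-partition of D - v and insert v
    have hvne : ∀ u ∈ S, u ≠ v := fun u huS h => hvS (h ▸ huS)
    set F : List {u : α // u ≠ v} → List α := List.map Subtype.val with hF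
    have hFmem : ∀ (m : List {u : α // u ≠ v}) (u : α) (hun : u ≠ v),
        u ∈ F m ↔ (⟨u, hun⟩ : {u : α // u ≠ v}) ∈ m := by
      intro m u hun
      constructor
      · intro hmem
        obtain ⟨w, hw, hwu⟩ := List.mem_map.mp hmem
        have : w = ⟨u, hun⟩ := Subtype.ext hwu
        rwa [this] at hw
      · intro hmem
        exact List.mem_map.mpr ⟨⟨u, hun⟩, hmem, rfl⟩
    have hvF : ∀ m, v ∉ F m := by
      intro m hmem
      obtain ⟨w, _, hwu⟩ := List.mem_map.mp hmem
      exact w.2 hwu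
    set S' : Set {u : α // u ≠ v} := {u | u.1 ∈ S} with hS'def
    have hSimg : Subtype.val '' S' = S := by
      ext u
      constructor
      · rintro ⟨w, hw, rfl⟩; exact hw
      · intro huS; exact ⟨⟨u, hvne u huS⟩, huS, rfl⟩
    have hmax : IsMaxStable (fun a b : {u : α // u ≠ v} => A a.1 b.1) S' := by
      constructor
      · intro a ha b hb hne hadj
        exact hS.1 a.1 ha b.1 hb (fun h' => hne (Subtype.ext h')) hadj
      · intro T hT
        have hst : IsStable A (Subtype.val '' T) := by
          rintro _ ⟨a, ha, rfl⟩ _ ⟨b, hb, rfl⟩ hne hadj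
          exact hT a ha b hb (fun h' => hne (by rw [h'])) hadj
        calc T.ncard = (Subtype.val '' T).ncard :=
              (Set.ncard_image_of_injective T Subtype.val_injective).symm
          _ ≤ S.ncard := hS.2 _ hst
          _ = S'.ncard := by
              rw [← hSimg, Set.ncard_image_of_injective _ Subtype.val_injective]
    obtain ⟨P', ⟨⟨hpath', hcover'⟩, hone'⟩⟩ := h S' hmax
    have hFpath : ∀ m ∈ P', IsDiPath A (F m) := by
      intro m hm
      obtain ⟨hne, hnd, hch⟩ := hpath' m hm
      refine ⟨fun h' => hne (List.map_eq_nil_iff.mp h'), hnd.map Subtype.val_injective, ?_⟩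
      exact (List.isChain_map _).mpr hch
    -- S is nonempty
    have hSne : S.Nonempty := by
      have h1 : IsStable A {v} := by
        rintro x rfl y rfl hxy _
        exact hxy rfl
      have := hS.2 _ h1
      rw [Set.ncard_singleton] at this
      exact Set.nonempty_of_ncard_ne_zero (by omega)
    obtain ⟨u₀, hu₀S⟩ := hSne
    obtain ⟨l₀', ⟨hl₀'P, hu₀l₀'⟩, _⟩ := hcover' ⟨u₀, hvne u₀ hu₀S⟩
    set l₀ : List α := F l₀' with hl₀
    obtain ⟨l₁, hl₁path, hl₁perm⟩ := insert_vertex A v l₀ (hFpath l₀' hl₀'P)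
      (hvF l₀') (fun u hu' => hu u (fun h' => hvF l₀' (h' ▸ hu')))
    have hl₁mem : ∀ u : α, u ∈ l₁ ↔ u = v ∨ u ∈ l₀ := by
      intro u
      rw [hl₁perm.mem_iff, List.mem_cons]
    refine ⟨insert l₁ (F '' (P' \ {l₀'})), ⟨⟨?_, ?_⟩, ?_⟩⟩
    · rintro l (rfl | ⟨m, hm, rfl⟩)
      · exact hl₁path
      · exact hFpath m hm.1
    · intro u
      by_cases huv : u = v
      · subst huv
        refine ⟨l₁, ⟨Set.mem_insert _ _, (hl₁mem u).mpr (Or.inl rfl)⟩, ?_⟩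
        rintro m ⟨(rfl | ⟨m', _, rfl⟩), hvm⟩
        · rfl
        · exact absurd hvm (hvF m')
      · obtain ⟨lu', ⟨hluP, hulu⟩, huniq'⟩ := hcover' ⟨u, huv⟩
        by_cases hcase : lu' = l₀'
        · subst hcase
          have hul₀ : u ∈ l₀ := (hFmem lu' u huv).mpr hulu
          refine ⟨l₁, ⟨Set.mem_insert _ _, (hl₁mem u).mpr (Or.inr hul₀)⟩, ?_⟩
          rintro m ⟨(rfl | ⟨m', hm', rfl⟩), hum⟩
          · rfl
          · exact absurd (huniq' m' ⟨hm'.1, (hFmem m' u huv).mp hum⟩) hm'.2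
        · refine ⟨F lu', ⟨Set.mem_insert_of_mem _ ⟨lu', ⟨hluP, hcase⟩, rfl⟩,
            (hFmem lu' u huv).mpr hulu⟩, ?_⟩
          rintro m ⟨(rfl | ⟨m', hm', rfl⟩), hum⟩
          · rcases (hl₁mem u).mp hum with rfl | hul₀
            · exact absurd rfl huv
            · exact absurd (huniq' l₀' ⟨hl₀'P, (hFmem l₀' u huv).mp hul₀⟩) (fun h' => hcase h'.symm)
          · rw [huniq' m' ⟨hm'.1, (hFmem m' u huv).mp hum⟩]
    · rintro l (rfl | ⟨m', hm', rfl⟩)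
      · obtain ⟨s', ⟨hs'l, hs'S⟩, hsuniq⟩ := hone' l₀' hl₀'P
        refine ⟨s'.1, ⟨(hl₁mem _).mpr (Or.inr ((hFmem l₀' s'.1 s'.2).mpr hs'l)), hs'S⟩, ?_⟩
        rintro t ⟨htl, htS⟩
        have htv : t ≠ v := hvne t htS
        rcases (hl₁mem t).mp htl with rfl | htl₀
        · exact absurd rfl htv
        · have := hsuniq ⟨t, htv⟩ ⟨(hFmem l₀' t htv).mp htl₀, htS⟩
          rw [← this]
      · obtain ⟨s', ⟨hs'l, hs'S⟩, hsuniq⟩ := hone' m' hm'.1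
        refine ⟨s'.1, ⟨(hFmem m' s'.1 s'.2).mpr hs'l, hs'S⟩, ?_⟩
        rintro t ⟨htl, htS⟩
        have htv : t ≠ v := hvne t htS
        have := hsuniq ⟨t, htv⟩ ⟨(hFmem m' t htv).mp htl, htS⟩
        rw [← this]

/-- If `v` is a universal vertex of `D`, then `D` is α-diperfect iff `D - v` is
α-diperfect. -/
theorem universal_alphaDiperfect_iff {V : Type*} [Finite V] (A : V → V → Prop)
    (hirr : ∀ v, ¬ A v v) (v : V) (hu : IsUniversal A v) :
    AlphaDiperfect A ↔ AlphaDiperfect (fun a b : {u : V // u ≠ v} => A a.1 b.1) := by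
  constructor
  · intro hA W'
    exact alphaProperty_of_equiv (Equiv.Set.image Subtype.val W' Subtype.val_injective)
      (fun a b => Iff.rfl) (hA (Subtype.val '' W'))
  · intro hA' W
    by_cases hvW : v ∈ W
    · refine alphaProperty_of_universal _ ⟨v, hvW⟩ ?_ ?_
      · intro u hne
        exact hu u.1 (fun h' => hne (Subtype.ext h'))
      · exact alphaProperty_of_equiv
          (show {u : ↥W // u ≠ ⟨v, hvW⟩} ≃ ↥{u : {x : V // x ≠ v} | u.1 ∈ W} from
            { toFun := fun a => ⟨⟨a.1.1, fun h' => a.2 (Subtype.ext h')⟩, a.1.2⟩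
              invFun := fun b => ⟨⟨b.1.1, b.2⟩, fun h' => b.1.2 (congrArg Subtype.val h')⟩
              left_inv := fun a => rfl
              right_inv := fun b => rfl })
          (fun a b => Iff.rfl) (hA' {u : {x : V // x ≠ v} | u.1 ∈ W})
    · exact alphaProperty_of_equiv
        (show ↥W ≃ ↥{u : {x : V // x ≠ v} | u.1 ∈ W} from
          { toFun := fun a => ⟨⟨a.1, fun h' => hvW (h' ▸ a.2)⟩, a.2⟩
            invFun := fun b => ⟨b.1.1, b.2⟩
            left_inv := fun a => rfl
            right_inv := fun b => rfl })
        (fun a b => Iff.rfl) (hA' {u : {x : V // x ≠ v} | u.1 ∈ W})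
end

section
/- Let D be a digraph with no induced blocking odd cycle, and let v be a universal vertex of D. If D − v satisfies the BE-property, then D satisfies the BE-property. -/
open Relation

variable {V : Type*}

section AuxUB

variable {V : Type*}

lemma blocking_triangle' {A : V → V → Prop} (hirr : ∀ x, ¬ A x x)
    {a b c : V} (hab : a ≠ b) (hac : a ≠ c) (hbc : b ≠ c)
    (hAab : A a b) (hAac : A a c) (hAcb : A c b)
    (hba : ¬ A b a) (hca : ¬ A c a) (hbc' : ¬ A b c) :
    ∃ W : Set V, IsBlockingOddCycle (fun x y : W => A x.1 y.1) := by
  classical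
  have hmema : a ∈ ({a,b,c} : Set V) := by simp
  have hmemb : b ∈ ({a,b,c} : Set V) := by simp
  have hmemc : c ∈ ({a,b,c} : Set V) := by simp
  set W : Set V := {a, b, c} with hW
  set x : ZMod (2*1+1) → W := fun i => if i = 0 then ⟨a, hmema⟩ else if i = 1 then ⟨b, hmemb⟩
    else ⟨c, hmemc⟩ with hx
  have e0 : x 0 = ⟨a, hmema⟩ := by rw [hx]; simp
  have e1 : x 1 = ⟨b, hmemb⟩ := by
    rw [hx]; simp [show ¬(1:ZMod (2*1+1)) = 0 by decide]
  have e2 : x 2 = ⟨c, hmemc⟩ := by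
    rw [hx]
    simp [show ¬(2:ZMod (2*1+1)) = 0 by decide, show ¬(2:ZMod (2*1+1)) = 1 by decide]
  have h3 : ∀ i : ZMod (2*1+1), i = 0 ∨ i = 1 ∨ i = 2 := by decide
  refine ⟨W, 1, x, le_refl 1, ⟨?_, ?_⟩, ?_, ?_, ?_⟩
  · intro i j hij
    rcases h3 i with rfl|rfl|rfl <;> rcases h3 j with rfl|rfl|rfl <;>
      simp only [e0, e1, e2, Subtype.mk.injEq] at hij ⊢ <;>
      first
        | rfl
        | exact absurd hij hab
        | exact absurd hij hac
        | exact absurd hij hbc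
        | exact absurd hij.symm hab
        | exact absurd hij.symm hac
        | exact absurd hij.symm hbc
  · rintro ⟨u, hu⟩
    rcases (by simpa [hW] using hu : u = a ∨ u = b ∨ u = c) with rfl|rfl|rfl
    · exact ⟨0, by rw [e0]⟩
    · exact ⟨1, by rw [e1]⟩
    · exact ⟨2, by rw [e2]⟩
  · intro i j
    rcases h3 i with rfl|rfl|rfl <;> rcases h3 j with rfl|rfl|rfl <;>
      simp only [e0, e1, e2, DAdj] <;>
      constructor <;> intro hd
    all_goals first
      | (rcases hd with hh|hh <;> first | exact (hirr _ hh).elim | decide)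
      | exact absurd hd (by decide)
      | exact Or.inl hAab
      | exact Or.inl hAac
      | exact Or.inl hAcb
      | exact Or.inr hAab
      | exact Or.inr hAac
      | exact Or.inr hAcb
  · left
    intro u hAu
    have hu2 := u.2
    simp only [hW, Set.mem_insert_iff, Set.mem_singleton_iff] at hu2
    simp only [e0] at hAu
    rcases hu2 with hh|hh|hh <;> rw [hh] at hAu
    exacts [hirr a hAu, hba hAu, hca hAu]
  · right
    intro u hAu
    have hu2 := u.2
    simp only [hW, Set.mem_insert_iff, Set.mem_singleton_iff] at hu2
    simp only [e1] at hAu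
    rcases hu2 with hh|hh|hh <;> rw [hh] at hAu
    exacts [hba hAu, hirr b hAu, hbc' hAu]

end AuxUB

open List in
lemma surgeryUB {V : Type*} {A : V → V → Prop} (hirr : ∀ x, ¬ A x x)
    (hB : ¬ ∃ W : Set V, IsBlockingOddCycle (fun a b : W => A a.1 b.1))
    {v : V} (hu : IsUniversal A v) :
    ∀ l : List V, l ≠ [] → l.Chain' A → l.Nodup → v ∉ l →
      ∃ l' : List V, l'.Chain' A ∧ l'.Perm (v :: l) ∧
        (l'.head? = l.head? ∨ ((∀ x ∈ l, A v x ∧ ¬ A x v) ∧ l' = v :: l.reverse))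
  | [] => fun hne _ _ _ => absurd rfl hne
  | [f] => fun _ _ _ hv => by
      classical
      have hfv : f ≠ v := by
        simp only [List.mem_singleton] at hv; exact fun h => hv h.symm
      by_cases hA : A f v
      · exact ⟨[f, v], List.isChain_pair.2 hA, List.Perm.swap v f [], Or.inl rfl⟩
      · have hvf : A v f := (hu f hfv).resolve_left hA
        refine ⟨[v, f], List.isChain_pair.2 hvf, List.Perm.refl _, Or.inr ⟨?_, rfl⟩⟩
        intro x hx
        rw [List.mem_singleton] at hx
        subst hx
        exact ⟨hvf, hA⟩
  | f :: g :: t => fun _ hc hnd hv => by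
      classical
      have hvf : f ≠ v := fun h => hv (by simp [h])
      have hvg : g ≠ v := fun h => hv (by simp [h])
      have hfg : f ≠ g := by
        have := hnd; simp only [List.nodup_cons, List.mem_cons] at this; tauto
      have hAfg : A f g := (List.isChain_cons_cons.1 hc).1
      obtain ⟨l2', hc2, hp2, hcase⟩ :=
        surgeryUB hirr hB hu (g :: t) (by simp) hc.tail hnd.of_cons
          (fun hmem => hv (List.mem_cons_of_mem f hmem))
      rcases hcase with hhead | ⟨hall, hrev⟩
      · refine ⟨f :: l2', ?_, ?_, Or.inl rfl⟩
        · refine List.isChain_cons.2 ⟨?_, hc2⟩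
          intro y hy
          rw [hhead] at hy
          simp only [List.head?_cons, Option.mem_some_iff] at hy
          subst hy; exact hAfg
        · exact (List.Perm.cons f hp2).trans (List.Perm.swap v f (g :: t))
      · by_cases hfvA : A f v
        · refine ⟨f :: l2', ?_, ?_, Or.inl rfl⟩
          · refine List.isChain_cons.2 ⟨?_, hc2⟩
            intro y hy
            rw [hrev] at hy
            simp only [List.head?_cons, Option.mem_some_iff] at hy
            subst hy; exact hfvA
          · exact (List.Perm.cons f hp2).trans (List.Perm.swap v f (g :: t))
        · have hvfA : A v f := (hu f hvf).resolve_left hfvA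
          have hAvg : A v g := (hall g (by simp)).1
          have hgvA : ¬ A g v := (hall g (by simp)).2
          have hgf : A g f := by
            by_contra hgf
            exact hB (blocking_triangle' hirr (Ne.symm hvg) (Ne.symm hvf) (Ne.symm hfg)
              hAvg hvfA hAfg hgvA hfvA hgf)
          refine ⟨v :: (f :: g :: t).reverse, ?_, ?_, Or.inr ⟨?_, rfl⟩⟩
          · refine List.isChain_cons.2 ⟨?_, ?_⟩
            · intro y hy
              have hy' : y ∈ (f :: g :: t).reverse := List.mem_of_mem_head? hy
              rw [List.mem_reverse] at hy'
              rcases List.mem_cons.1 hy' with h|h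
              · exact h ▸ hvfA
              · exact (hall y h).1
            · rw [List.isChain_reverse]
              refine List.isChain_cons_cons.2 ⟨hgf, ?_⟩
              have h2 : (g :: t).reverse.Chain' A := (hrev ▸ hc2 : _).tail
              exact List.isChain_reverse.1 h2
          · exact ((f :: g :: t).reverse_perm).cons v
          · intro x hx
            rcases List.mem_cons.1 hx with h|h
            · exact h ▸ ⟨hvfA, hfvA⟩
            · exact hall x h

lemma blockingFlipUB {V : Type*} {A : V → V → Prop} {W : Set V}
    (h : IsBlockingOddCycle (fun a b : W => A b.1 a.1)) :
    IsBlockingOddCycle (fun a b : W => A a.1 b.1) := by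
  obtain ⟨k, x, hk, hbij, hadj, h0, h1⟩ := h
  refine ⟨k, x, hk, hbij, ?_, ?_, ?_⟩
  · intro i j
    rw [← hadj i j]
    exact ⟨fun hd => Or.symm hd, fun hd => Or.symm hd⟩
  · rcases h0 with h0 | h0
    · exact Or.inr (fun u => h0 u)
    · exact Or.inl (fun u => h0 u)
  · rcases h1 with h1 | h1
    · exact Or.inr (fun u => h1 u)
    · exact Or.inl (fun u => h1 u)

open List in
lemma surgery2UB {V : Type*} {A : V → V → Prop} (hirr : ∀ x, ¬ A x x)
    (hB : ¬ ∃ W : Set V, IsBlockingOddCycle (fun a b : W => A a.1 b.1))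
    {v : V} (hu : IsUniversal A v)
    (l : List V) (s : V) (hne : l ≠ []) (hc : l.Chain' A) (hnd : l.Nodup) (hv : v ∉ l)
    (hs : l.head? = some s ∨ l.getLast? = some s) :
    ∃ l' : List V, l'.Chain' A ∧ l'.Perm (v :: l) ∧
      (l'.head? = some s ∨ l'.getLast? = some s) := by
  rcases hs with hs | hs
  · obtain ⟨l', h1, h2, h3⟩ := surgeryUB hirr hB hu l hne hc hnd hv
    refine ⟨l', h1, h2, ?_⟩
    rcases h3 with h3 | ⟨_, rfl⟩
    · exact Or.inl (h3.trans hs)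
    · right
      have hrw : (v :: l.reverse) = (l ++ [v]).reverse := by simp
      rw [hrw, List.getLast?_reverse, List.head?_append, hs]
      rfl
  · -- apply to the reversed list with the flipped relation
    have hirr' : ∀ x, ¬ (fun a b => A b a) x x := hirr
    have hB' : ¬ ∃ W : Set V, IsBlockingOddCycle (fun a b : W => (fun p q => A q p) a.1 b.1) :=
      fun ⟨W, hW⟩ => hB ⟨W, blockingFlipUB hW⟩
    have hu' : IsUniversal (fun a b => A b a) v := fun u h => Or.symm (hu u h)
    have hcr : l.reverse.Chain' (fun a b => A b a) := by
      exact List.isChain_reverse.2 hc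
    obtain ⟨l', h1, h2, h3⟩ := surgeryUB (A := fun a b => A b a) hirr' hB' hu' l.reverse
      (by simpa using hne) hcr (List.nodup_reverse.2 hnd) (by simpa using hv)
    refine ⟨l'.reverse, ?_, ?_, ?_⟩
    · exact List.isChain_reverse.2 h1
    · exact (l'.reverse_perm).trans (h2.trans ((l.reverse_perm).cons v))
    · rcases h3 with h3 | ⟨_, rfl⟩
      · right
        rw [List.getLast?_reverse, h3, List.head?_reverse]
        exact hs
      · left
        rw [List.head?_reverse]
        have hrw : (v :: l.reverse.reverse) = (l.reverse ++ [v]).reverse := by simp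
        rw [hrw, List.getLast?_reverse, List.head?_append, List.head?_reverse, hs]
        rfl

lemma singletonBE {V : Type*} {A : V → V → Prop} {v : V} (ham : List V)
    (hc : ham.Chain' A) (hnd : ham.Nodup) (hmem : ∀ x : V, x ∈ ham)
    (hend : ham.head? = some v ∨ ham.getLast? = some v) :
    IsBEPartition A {v} ({ham} : Set (List V)) := by
  refine ⟨⟨⟨?_, ?_⟩, ?_⟩, ?_⟩
  · intro lp hlp
    rw [Set.mem_singleton_iff] at hlp
    subst hlp
    exact ⟨List.ne_nil_of_mem (hmem v), hnd, hc⟩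
  · intro x
    refine ⟨ham, ⟨rfl, hmem x⟩, ?_⟩
    rintro lp ⟨hlp, -⟩
    exact hlp
  · intro lp hlp
    rw [Set.mem_singleton_iff] at hlp
    subst hlp
    refine ⟨v, ⟨hmem v, rfl⟩, ?_⟩
    rintro y ⟨-, hy⟩
    exact hy
  · intro lp hlp s _ hsS
    rw [Set.mem_singleton_iff] at hlp hsS
    subst hlp; subst hsS
    exact hend

/-- Let `D` be a digraph with no induced blocking odd cycle and `v` a universal vertex.
If `D - v` satisfies the BE-property, then so does `D`. -/
theorem universal_BEProperty {V : Type*} [Finite V] (A : V → V → Prop)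
    (hirr : ∀ v, ¬ A v v)
    (hB : ¬ ∃ W : Set V, IsBlockingOddCycle (fun a b : W => A a.1 b.1))
    (v : V) (hu : IsUniversal A v)
    (h : BEProperty (fun a b : {u : V // u ≠ v} => A a.1 b.1)) :
    BEProperty A := by
  classical
  intro S hS
  by_cases hvS : v ∈ S
  · -- Case 1 : `v ∈ S`, so `S = {v}` and the digraph is semicomplete.
    have hSv : S = {v} := by
      apply Set.eq_singleton_iff_unique_mem.2
      refine ⟨hvS, fun u huS => ?_⟩
      by_contra hne
      exact hS.1 u huS v hvS hne (hu u hne)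
    have hsemi : ∀ u w : V, u ≠ w → DAdj A u w := by
      intro u w hne
      by_contra hd
      have hst : IsStable A {u, w} := by
        intro a ha b hb hab had
        simp only [Set.mem_insert_iff, Set.mem_singleton_iff] at ha hb
        rcases ha with rfl|rfl <;> rcases hb with rfl|rfl
        · exact hab rfl
        · exact hd had
        · exact hd (Or.symm had)
        · exact hab rfl
      have h2 := hS.2 _ hst
      rw [hSv, Set.ncard_singleton, Set.ncard_pair hne] at h2
      omega
    rw [hSv]
    by_cases hall : ∀ u : V, u = v
    · refine ⟨{[v]}, singletonBE _ (List.isChain_singleton v) (List.nodup_singleton v)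
        (fun x => by rw [hall x]; simp) (Or.inl rfl)⟩
    · push_neg at hall
      obtain ⟨u, huv⟩ := hall
      have hT : IsMaxStable (fun a b : {x : V // x ≠ v} => A a.1 b.1)
          ({⟨u, huv⟩} : Set {x : V // x ≠ v}) := by
        constructor
        · intro a ha b hb hab _
          rw [Set.mem_singleton_iff] at ha hb
          exact hab (ha.trans hb.symm)
        · intro T hTst
          have hTst' : IsStable A (Subtype.val '' T) := by
            rintro _ ⟨a, haT, rfl⟩ _ ⟨b, hbT, rfl⟩ hne hd
            exact hTst a haT b hbT (fun e => hne (by rw [e])) hd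
          have h2 := hS.2 _ hTst'
          rw [hSv, Set.ncard_singleton] at h2
          rw [Set.ncard_image_of_injective _ Subtype.val_injective] at h2
          simpa using h2
      obtain ⟨P'', hP''⟩ := h _ hT
      obtain ⟨l0, ⟨hl0P, hul0⟩, huniq⟩ := hP''.1.1.2 ⟨u, huv⟩
      have hallin : ∀ x : {x : V // x ≠ v}, x ∈ l0 := by
        intro x
        obtain ⟨l1, ⟨hl1P, hxl1⟩, -⟩ := hP''.1.1.2 x
        obtain ⟨s, ⟨hsl1, hsT⟩, -⟩ := hP''.1.2 l1 hl1P
        rw [Set.mem_singleton_iff] at hsT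
        subst hsT
        have he : l1 = l0 := huniq l1 ⟨hl1P, hsl1⟩
        exact he ▸ hxl1
      obtain ⟨hl0ne, hl0nd, hl0c⟩ := hP''.1.1.1 l0 hl0P
      have hlc : (l0.map Subtype.val).Chain' A := (List.isChain_map _).2 hl0c
      have hlnd : (l0.map Subtype.val).Nodup := hl0nd.map Subtype.val_injective
      set l : List V := l0.map Subtype.val with hldef
      have hlne : l ≠ [] := fun he => hl0ne (List.map_eq_nil_iff.1 he)
      have hvnl : v ∉ l := by
        intro hm
        rw [hldef, List.mem_map] at hm
        obtain ⟨a, -, ha⟩ := hm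
        exact a.2 ha
      have hmem : ∀ x : V, x ≠ v → x ∈ l := fun x hx =>
        List.mem_map.2 ⟨⟨x, hx⟩, hallin _, rfl⟩
      obtain ⟨f, t, hlft⟩ := List.exists_cons_of_ne_nil hlne
      obtain ⟨z, hz⟩ := Option.isSome_iff_exists.1 (List.getLast?_isSome.2 hlne)
      have hfl : f ∈ l := by rw [hlft]; exact List.mem_cons_self
      have hzl : z ∈ l := List.mem_of_getLast? hz
      have hfv : f ≠ v := fun e => hvnl (e ▸ hfl)
      have hzv : z ≠ v := fun e => hvnl (e ▸ hzl)
      have hheadf : l.head? = some f := by rw [hlft]; rfl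
      by_cases hzvA : A z v
      · refine ⟨{l ++ [v]}, singletonBE _ ?_ ?_ ?_ (Or.inr (List.getLast?_concat))⟩
        · refine List.IsChain.append hlc (List.isChain_singleton v) ?_
          intro a ha b hb
          rw [hz, Option.mem_some_iff] at ha
          simp only [List.head?_cons, Option.mem_some_iff] at hb
          subst ha; subst hb; exact hzvA
        · refine hlnd.append (List.nodup_singleton v) ?_
          intro a hal hav
          rw [List.mem_singleton] at hav
          subst hav; exact hvnl hal
        · intro x
          rcases eq_or_ne x v with rfl | hx
          · simp
          · exact List.mem_append_left _ (hmem x hx)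
      · by_cases hvfA : A v f
        · refine ⟨{v :: l}, singletonBE _ ?_ (List.nodup_cons.2 ⟨hvnl, hlnd⟩) ?_ (Or.inl rfl)⟩
          · refine List.isChain_cons.2 ⟨?_, hlc⟩
            intro y hy
            rw [hheadf, Option.mem_some_iff] at hy
            subst hy; exact hvfA
          · intro x
            rcases eq_or_ne x v with rfl | hx
            · exact List.mem_cons_self
            · exact List.mem_cons_of_mem _ (hmem x hx)
        · have hfvA : A f v := (hu f hfv).resolve_right hvfA
          have hvzA : A v z := (hu z hzv).resolve_left hzvA
          have hfz : f ≠ z := fun e => hzvA (e ▸ hfvA)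
          have hzfA : A z f := by
            by_cases hzf : A z f
            · exact hzf
            · exfalso
              have hfzA : A f z := (hsemi f z hfz).resolve_right hzf
              exact hB (blocking_triangle' hirr hfz hfv hzv hfzA hfvA hvzA hzf hvfA hzvA)
          have htne : t ≠ [] := by
            intro he
            rw [hlft, he] at hz
            simp only [List.getLast?_cons, List.getLast?_nil, Option.getD_none] at hz
            exact hfz (Option.some.inj hz)
          have hzt : t.getLast? = some z := by
            rw [hlft, List.getLast?_cons] at hz
            obtain ⟨w, hw⟩ := Option.isSome_iff_exists.1 (List.getLast?_isSome.2 htne)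
            rw [hw] at hz ⊢
            simpa using hz
          have hperm : (t ++ [f, v]).Perm (v :: f :: t) := by
            have h1 : t ++ [f, v] = (t ++ [f]) ++ [v] := by simp
            rw [h1]
            exact (List.perm_append_singleton v (t ++ [f])).trans
              ((List.perm_append_singleton f t).cons v)
          have hvlft : v ∉ f :: t := hlft ▸ hvnl
          have hndcons : (v :: f :: t).Nodup := List.nodup_cons.2 ⟨hvlft, hlft ▸ hlnd⟩
          refine ⟨{t ++ [f, v]}, singletonBE _ ?_ (hperm.nodup_iff.2 hndcons) ?_ ?_⟩
          · refine List.IsChain.append ?_ (List.isChain_pair.2 hfvA) ?_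
            · have hcft : (f :: t).Chain' A := hlft ▸ hlc
              exact hcft.tail
            · intro a ha b hb
              rw [hzt, Option.mem_some_iff] at ha
              simp only [List.head?_cons, Option.mem_some_iff] at hb
              subst ha; subst hb; exact hzfA
          · intro x
            rw [hperm.mem_iff]
            rcases eq_or_ne x v with rfl | hx
            · exact List.mem_cons_self
            · exact List.mem_cons_of_mem v (hlft ▸ hmem x hx)
          · right
            have h1 : t ++ [f, v] = (t ++ [f]) ++ [v] := by simp
            rw [h1]
            exact List.getLast?_concat
  · -- Case 2 : `v ∉ S`.
    have hSsub : ∀ s ∈ S, s ≠ v := fun s hs hsv => hvS (hsv ▸ hs)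
    set S' : Set {x : V // x ≠ v} := {x | x.1 ∈ S} with hS'def
    have hSim : Subtype.val '' S' = S := by
      apply Set.eq_of_subset_of_subset
      · rintro _ ⟨a, haS, rfl⟩; exact haS
      · intro s hs; exact ⟨⟨s, hSsub s hs⟩, hs, rfl⟩
    have hmax' : IsMaxStable (fun a b : {x : V // x ≠ v} => A a.1 b.1) S' := by
      constructor
      · intro a ha b hb hab hd
        exact hS.1 a.1 ha b.1 hb (fun hv2 => hab (Subtype.ext hv2)) hd
      · intro T hT
        have hTst : IsStable A (Subtype.val '' T) := by
          rintro _ ⟨a, haT, rfl⟩ _ ⟨b, hbT, rfl⟩ hne hd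
          exact hT a haT b hbT (fun e => hne (by rw [e])) hd
        have h2 := hS.2 _ hTst
        rw [← hSim] at h2
        rwa [Set.ncard_image_of_injective _ Subtype.val_injective,
          Set.ncard_image_of_injective _ Subtype.val_injective] at h2
    obtain ⟨P', hP'⟩ := h S' hmax'
    have hVne : ∃ u : V, u ≠ v := by
      by_contra hcon
      push_neg at hcon
      have hSe : S = ∅ := by
        ext s
        simp only [Set.mem_empty_iff_false, iff_false]
        intro hs; exact hSsub s hs (hcon s)
      have hstv : IsStable A {v} := by
        intro a ha b hb hab _
        rw [Set.mem_singleton_iff] at ha hb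
        exact hab (ha.trans hb.symm)
      have h2 := hS.2 _ hstv
      rw [hSe, Set.ncard_singleton, Set.ncard_empty] at h2
      omega
    obtain ⟨u, huv⟩ := hVne
    obtain ⟨l0', ⟨hl0'P, -⟩, -⟩ := hP'.1.1.2 ⟨u, huv⟩
    obtain ⟨hl0ne, hl0nd, hl0c⟩ := hP'.1.1.1 l0' hl0'P
    obtain ⟨s0, ⟨hs0mem, hs0S⟩, hs0uniq⟩ := hP'.1.2 l0' hl0'P
    have hend0 := hP'.2 l0' hl0'P s0 hs0mem hs0S
    have hlc : (l0'.map Subtype.val).Chain' A := (List.isChain_map _).2 hl0c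
    have hlnd : (l0'.map Subtype.val).Nodup := hl0nd.map Subtype.val_injective
    set l0 : List V := l0'.map Subtype.val with hl0def
    have hlne : l0 ≠ [] := fun he => hl0ne (List.map_eq_nil_iff.1 he)
    have hvnl : v ∉ l0 := by
      intro hm
      rw [hl0def, List.mem_map] at hm
      obtain ⟨a, -, ha⟩ := hm
      exact a.2 ha
    have hpull : ∀ (l' : List {x : V // x ≠ v}) (y : V) (hy : y ≠ v),
        y ∈ l'.map Subtype.val → (⟨y, hy⟩ : {x : V // x ≠ v}) ∈ l' := by
      intro l' y hy hmem'
      rw [List.mem_map] at hmem'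
      obtain ⟨a, hal, hav⟩ := hmem'
      have he : a = ⟨y, hy⟩ := Subtype.ext hav
      exact he ▸ hal
    have hend0' : l0.head? = some s0.1 ∨ l0.getLast? = some s0.1 := by
      rcases hend0 with hh | hh
      · left; rw [hl0def, List.head?_map, hh]; rfl
      · right; rw [hl0def, List.getLast?_map, hh]; rfl
    obtain ⟨m, hmc, hmp, hmend⟩ := surgery2UB hirr hB hu l0 s0.1 hlne hlc hlnd hvnl hend0'
    have hmmem : ∀ x : V, x ∈ m ↔ x = v ∨ x ∈ l0 := by
      intro x; rw [hmp.mem_iff, List.mem_cons]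
    have hvm : v ∈ m := (hmmem v).2 (Or.inl rfl)
    have hmnd : m.Nodup := hmp.nodup_iff.2 (List.nodup_cons.2 ⟨hvnl, hlnd⟩)
    set Pr : Set (List V) :=
      (fun l' : List {x : V // x ≠ v} => l'.map Subtype.val) '' (P' \ {l0'}) with hPrdef
    have hvnotPr : ∀ lp ∈ Pr, v ∉ lp := by
      rintro _ ⟨l', -, rfl⟩ hvlp
      rw [List.mem_map] at hvlp
      obtain ⟨a, -, ha⟩ := hvlp
      exact a.2 ha
    -- uniqueness of the S-vertex on m
    have hmuniq : ∀ y : V, y ∈ m → y ∈ S → y = s0.1 := by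
      intro y hym hyS
      have hyv : y ≠ v := hSsub y hyS
      rcases (hmmem y).1 hym with rfl | hyl0
      · exact absurd rfl hyv
      · have hy' : (⟨y, hyv⟩ : {x : V // x ≠ v}) ∈ l0' := hpull l0' y hyv hyl0
        have he := hs0uniq ⟨y, hyv⟩ ⟨hy', hyS⟩
        exact congrArg Subtype.val he
    refine ⟨insert m Pr, ⟨⟨⟨?_, ?_⟩, ?_⟩, ?_⟩⟩
    · -- every member is a directed path
      rintro lp hlp
      rcases Set.mem_insert_iff.1 hlp with rfl | ⟨l', hl', rfl⟩
      · exact ⟨List.ne_nil_of_mem hvm, hmnd, hmc⟩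
      · obtain ⟨hne', hnd', hc'⟩ := hP'.1.1.1 l' hl'.1
        exact ⟨fun he => hne' (List.map_eq_nil_iff.1 he), hnd'.map Subtype.val_injective,
          (List.isChain_map _).2 hc'⟩
    · -- every vertex on exactly one path
      intro x
      by_cases hxv : x = v
      · subst hxv
        refine ⟨m, ⟨Set.mem_insert _ _, hvm⟩, ?_⟩
        rintro lp ⟨hlp, hxlp⟩
        rcases Set.mem_insert_iff.1 hlp with rfl | hlpPr
        · rfl
        · exact absurd hxlp (hvnotPr lp hlpPr)
      · obtain ⟨l1', ⟨hl1P, hxl1⟩, hux⟩ := hP'.1.1.2 ⟨x, hxv⟩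
        by_cases hcase : l1' = l0'
        · subst hcase
          refine ⟨m, ⟨Set.mem_insert _ _,
            (hmmem x).2 (Or.inr (List.mem_map.2 ⟨⟨x, hxv⟩, hxl1, rfl⟩))⟩, ?_⟩
          rintro lp ⟨hlp, hxlp⟩
          rcases Set.mem_insert_iff.1 hlp with rfl | ⟨l2', hl2', rfl⟩
          · rfl
          · exfalso
            have hx2 : (⟨x, hxv⟩ : {x : V // x ≠ v}) ∈ l2' := hpull l2' x hxv hxlp
            exact hl2'.2 (hux l2' ⟨hl2'.1, hx2⟩)
        · refine ⟨l1'.map Subtype.val, ⟨Set.mem_insert_of_mem _ ⟨l1', ⟨hl1P, hcase⟩, rfl⟩,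
            List.mem_map.2 ⟨⟨x, hxv⟩, hxl1, rfl⟩⟩, ?_⟩
          rintro lp ⟨hlp, hxlp⟩
          rcases Set.mem_insert_iff.1 hlp with rfl | ⟨l2', hl2', rfl⟩
          · exfalso
            rcases (hmmem x).1 hxlp with rfl | hxl0
            · exact hxv rfl
            · have hx2 : (⟨x, hxv⟩ : {x : V // x ≠ v}) ∈ l0' := hpull l0' x hxv hxl0
              exact hcase (hux l0' ⟨hl0'P, hx2⟩).symm
          · have hx2 : (⟨x, hxv⟩ : {x : V // x ≠ v}) ∈ l2' := hpull l2' x hxv hxlp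
            rw [hux l2' ⟨hl2'.1, hx2⟩]
    · -- exactly one S-vertex per path
      rintro lp hlp
      rcases Set.mem_insert_iff.1 hlp with rfl | ⟨l2', hl2', rfl⟩
      · refine ⟨s0.1, ⟨(hmmem _).2 (Or.inr (List.mem_map.2 ⟨s0, hs0mem, rfl⟩)), hs0S⟩, ?_⟩
        rintro y ⟨hym, hyS⟩
        exact hmuniq y hym hyS
      · obtain ⟨s2, ⟨hs2m, hs2S⟩, hs2u⟩ := hP'.1.2 l2' hl2'.1
        refine ⟨s2.1, ⟨List.mem_map.2 ⟨s2, hs2m, rfl⟩, hs2S⟩, ?_⟩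
        rintro y ⟨hym, hyS⟩
        have hyv : y ≠ v := hSsub y hyS
        have hy2 : (⟨y, hyv⟩ : {x : V // x ≠ v}) ∈ l2' := hpull l2' y hyv hym
        exact congrArg Subtype.val (hs2u ⟨y, hyv⟩ ⟨hy2, hyS⟩)
    · -- the S-vertex is an endpoint
      rintro lp hlp s hsl hsS
      rcases Set.mem_insert_iff.1 hlp with rfl | ⟨l2', hl2', rfl⟩
      · rw [hmuniq s hsl hsS]
        exact hmend
      · have hsv : s ≠ v := hSsub s hsS
        have hs2 : (⟨s, hsv⟩ : {x : V // x ≠ v}) ∈ l2' := hpull l2' s hsv hsl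
        have hend2 := hP'.2 l2' hl2'.1 ⟨s, hsv⟩ hs2 hsS
        rcases hend2 with hh | hh
        · left; rw [List.head?_map, hh]; rfl
        · right; rw [List.getLast?_map, hh]; rfl
end
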